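/- arXiv:2401.04922 — 10 statements merged into one kernel-verified Lean document; each statement's English description precedes it below -/
import Mathlib

section
/- For all positive integers a and b, every 2-coloring of the edges of the complete bipartite graph K_{n,k} with n = a·2^{2b} left vertices and k = 2b right vertices contains a monochromatic complete bipartite subgraph K_{a,b} (i.e., there exist a left vertices and b right vertices such that all ab edges between them have the same color). -/
/-- Bipartite Ramsey with explicit bounds: every 2-coloring of the edges of
`K_{a·2^(2b), 2b}` contains a monochromatic `K_{a,b}`. -/
theorem stmt_0 (a b : ℕ) (ha : 0 < a) (hb : 0 < b)
    (COL : Fin (a * 2 ^ (2 * b)) → Fin (2 * b) → Fin 2) :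
    ∃ (A : Finset (Fin (a * 2 ^ (2 * b)))) (B : Finset (Fin (2 * b))) (c : Fin 2),
      A.card = a ∧ B.card = b ∧ ∀ x ∈ A, ∀ y ∈ B, COL x y = c := by
  classical
  have h1 : Fintype.card (Fin (2 * b) → Fin 2) * a ≤ Fintype.card (Fin (a * 2 ^ (2 * b))) := by
    simp [mul_comm]
  obtain ⟨p, hp⟩ := Fintype.exists_le_card_fiber_of_mul_le_card (fun x => COL x) h1
  obtain ⟨A, hAsub, hAcard⟩ := Finset.exists_subset_card_eq hp
  have h2 : Fintype.card (Fin 2) * b ≤ Fintype.card (Fin (2 * b)) := by simp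
  obtain ⟨c, hc⟩ := Fintype.exists_le_card_fiber_of_mul_le_card p h2
  obtain ⟨B, hBsub, hBcard⟩ := Finset.exists_subset_card_eq hc
  refine ⟨A, B, c, hAcard, hBcard, fun x hx y hy => ?_⟩
  have hxp : COL x = p := by
    have := hAsub hx; simpa using this
  have hyc : p y = c := by
    have := hBsub hy; simpa using this
  rw [hxp, hyc]
end

section
/- For all positive integers a, b with b ≤ a, there exists n such that every 2-coloring of the edges of K_{n,k} (for some k) contains a monochromatic K_{a,b}; concretely, taking k = 2b and n = a·2^{2b} suffices: for every function COL : [n] × [2b] → {1,2}, there exist A ⊆ [n] with |A| = a, B ⊆ [2b] with |B| = b, and a color c ∈ {1,2} with COL(x,y) = c for all x ∈ A, y ∈ B. -/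
/-- Bipartite Ramsey theorem: for `b ≤ a`, taking `k = 2b` and `n = a·2^(2b)`,
every 2-coloring of `K_{n,k}` contains a monochromatic `K_{a,b}`. -/
theorem stmt_1 (a b : ℕ) (ha : 0 < a) (hb : 0 < b) (hba : b ≤ a)
    (COL : Fin (a * 2 ^ (2 * b)) → Fin (2 * b) → Fin 2) :
    ∃ (A : Finset (Fin (a * 2 ^ (2 * b)))) (B : Finset (Fin (2 * b))) (c : Fin 2),
      A.card = a ∧ B.card = b ∧ ∀ x ∈ A, ∀ y ∈ B, COL x y = c := by
  have h1 : (Finset.univ : Finset (Fin (2 * b) → Fin 2)).card * a ≤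
      (Finset.univ : Finset (Fin (a * 2 ^ (2 * b)))).card := by
    simp [mul_comm]
  have hp := Finset.exists_le_card_fiber_of_mul_le_card_of_maps_to
    (f := COL) (fun x _ => Finset.mem_univ _) Finset.univ_nonempty h1
  obtain ⟨p, -, hp⟩ := hp
  obtain ⟨A, hAsub, hAcard⟩ := Finset.exists_subset_card_eq hp
  have h2 : (Finset.univ : Finset (Fin 2)).card * b ≤
      (Finset.univ : Finset (Fin (2 * b))).card := by simp
  have hc := Finset.exists_le_card_fiber_of_mul_le_card_of_maps_to
    (f := p) (fun x _ => Finset.mem_univ _) Finset.univ_nonempty h2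
  obtain ⟨c, -, hc⟩ := hc
  obtain ⟨B, hBsub, hBcard⟩ := Finset.exists_subset_card_eq hc
  refine ⟨A, B, c, hAcard, hBcard, fun x hx y hy => ?_⟩
  have hxp : COL x = p := by
    have := hAsub hx; simp [Finset.mem_filter] at this; exact this
  have hyc : p y = c := by
    have := hBsub hy; simp [Finset.mem_filter] at this; exact this
  rw [hxp, hyc]
end

section
/- Let n = R, where R is any number large enough that every coloring of the 3-element subsets of [n] with 2·C(3,2) = 6 colors admits a homogeneous set of size 9. Then for every 2-coloring COL of the edges of B_{n,3}, there exists an induced monochromatic copy of B_{4,2}: i.e., there exist 4 left vertices and 6 right vertices of B_{n,3} inducing a subgraph isomorphic to B_{4,2}, all of whose edges receive the same color under COL. -/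
private def pv (COL : ℕ → Finset ℕ → Fin 2) (X : Finset ℕ) : Fin 3 × Fin 2 :=
  match X.sort (· ≤ ·) with
  | [a, b, c] =>
    if COL a X = COL b X then (0, COL a X)
    else if COL a X = COL c X then (1, COL a X)
    else (2, COL b X)
  | _ => (0, 0)

private lemma sort_triple {a b c : ℕ} (hab : a < b) (hbc : b < c) :
    ({a, b, c} : Finset ℕ).sort (· ≤ ·) = [a, b, c] := by
  rw [Finset.sort_insert (· ≤ ·) (by intro x hx; simp at hx; rcases hx with rfl | rfl <;> omega)
      (by simp; omega),
    Finset.sort_insert (· ≤ ·) (by intro x hx; simp at hx; subst hx; omega) (by simp; omega)]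
  simp [Finset.sort_singleton]

private lemma fin2_eq {x y z : Fin 2} (h1 : x ≠ y) (h2 : x ≠ z) : y = z := by
  fin_cases x <;> fin_cases y <;> fin_cases z <;> simp_all

private lemma card_triple {a b c : ℕ} (hab : a < b) (hbc : b < c) :
    ({a, b, c} : Finset ℕ).card = 3 := by
  rw [Finset.card_insert_of_notMem (by simp; omega),
    Finset.card_insert_of_notMem (by simp; omega), Finset.card_singleton]

private lemma pv_spec0 (COL : ℕ → Finset ℕ → Fin 2) {a b c : ℕ} (hab : a < b) (hbc : b < c)
    (cc : Fin 2) {X : Finset ℕ} (hX : X = {a, b, c})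
    (h : ((pv COL X).1 : ℕ) = 0) (hcc : (pv COL X).2 = cc) :
    COL a X = cc ∧ COL b X = cc := by
  subst hX
  rw [← hcc]
  have hsort := sort_triple hab hbc
  simp only [pv, hsort] at h ⊢
  split_ifs at h ⊢ with h1 h2 <;> simp_all

private lemma pv_spec1 (COL : ℕ → Finset ℕ → Fin 2) {a b c : ℕ} (hab : a < b) (hbc : b < c)
    (cc : Fin 2) {X : Finset ℕ} (hX : X = {a, b, c})
    (h : ((pv COL X).1 : ℕ) = 1) (hcc : (pv COL X).2 = cc) :
    COL a X = cc ∧ COL c X = cc := by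
  subst hX
  rw [← hcc]
  have hsort := sort_triple hab hbc
  simp only [pv, hsort] at h ⊢
  split_ifs at h ⊢ with h1 h2 <;> simp_all

private lemma pv_spec2 (COL : ℕ → Finset ℕ → Fin 2) {a b c : ℕ} (hab : a < b) (hbc : b < c)
    (cc : Fin 2) {X : Finset ℕ} (hX : X = {a, b, c})
    (h : ((pv COL X).1 : ℕ) = 2) (hcc : (pv COL X).2 = cc) :
    COL b X = cc ∧ COL c X = cc := by
  subst hX
  rw [← hcc]
  have hsort := sort_triple hab hbc
  simp only [pv, hsort] at h ⊢
  split_ifs at h ⊢ with h1 h2 <;> simp_all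
  exact (fin2_eq h1 h2).symm

private lemma pair_lt (S : Finset (Fin 4)) (hS : S.card = 2) :
    ∃ a b, a < b ∧ S = {a, b} := by
  obtain ⟨x, y, hxy, rfl⟩ := Finset.card_eq_two.mp hS
  rcases lt_or_gt_of_ne hxy with h | h
  · exact ⟨x, y, h, rfl⟩
  · exact ⟨y, x, h, Finset.pair_comm x y⟩

private lemma assemble (n : ℕ) (COL : ℕ → Finset ℕ → Fin 2) (cc : Fin 2)
    (F : Fin 4 → ℕ) (Z : Finset (Fin 4) → ℕ)
    (hFmono : StrictMono F)
    (hFmem : ∀ i, F i ∈ Finset.Icc 1 n)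
    (hZmem : ∀ S : Finset (Fin 4), S.card = 2 → Z S ∈ Finset.Icc 1 n)
    (hZne : ∀ (S : Finset (Fin 4)) (i : Fin 4), Z S ≠ F i)
    (hcol : ∀ a b : Fin 4, a < b →
      COL (F a) {F a, F b, Z {a, b}} = cc ∧ COL (F b) {F a, F b, Z {a, b}} = cc) :
    ∃ (f : Fin 4 → ℕ) (g : Finset (Fin 4) → Finset ℕ) (c : Fin 2),
      Function.Injective f ∧ (∀ i, f i ∈ Finset.Icc 1 n) ∧
      (∀ S : Finset (Fin 4), S.card = 2 →
        g S ⊆ Finset.Icc 1 n ∧ (g S).card = 3) ∧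
      (∀ S T : Finset (Fin 4), S.card = 2 → T.card = 2 → g S = g T → S = T) ∧
      (∀ (i : Fin 4) (S : Finset (Fin 4)), S.card = 2 → (f i ∈ g S ↔ i ∈ S)) ∧
      (∀ (i : Fin 4) (S : Finset (Fin 4)), S.card = 2 → i ∈ S →
        COL (f i) (g S) = c) := by
  set g : Finset (Fin 4) → Finset ℕ := fun S => insert (Z S) (S.image F) with hg
  have hgS : ∀ a b : Fin 4, a < b → g {a, b} = {F a, F b, Z {a, b}} := by
    intro a b _
    rw [hg]
    simp only [Finset.image_insert, Finset.image_singleton]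
    ext x
    simp only [Finset.mem_insert, Finset.mem_singleton]
    tauto
  have hmemiff : ∀ (i : Fin 4) (S : Finset (Fin 4)), (F i ∈ g S ↔ i ∈ S) := by
    intro i S
    rw [hg]
    simp only [Finset.mem_insert, Finset.mem_image]
    constructor
    · rintro ((h : F i = Z S) | ⟨j, hj, hji⟩)
      · exact absurd h.symm (hZne S i)
      · rwa [← hFmono.injective hji]
    · intro h
      exact Or.inr ⟨i, h, rfl⟩
  refine ⟨F, g, cc, hFmono.injective, hFmem, ?_, ?_, fun i S _ => hmemiff i S, ?_⟩
  · intro S hS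
    obtain ⟨a, b, hab, rfl⟩ := pair_lt S hS
    rw [hgS a b hab]
    constructor
    · intro x hx
      simp only [Finset.mem_insert, Finset.mem_singleton] at hx
      rcases hx with rfl | rfl | rfl
      · exact hFmem a
      · exact hFmem b
      · exact hZmem _ hS
    · rw [Finset.card_insert_of_notMem (by
          simp only [Finset.mem_insert, Finset.mem_singleton]
          push_neg
          exact ⟨hFmono.injective.ne hab.ne, fun h => hZne _ _ h.symm⟩),
        Finset.card_insert_of_notMem (by
          simp only [Finset.mem_singleton]
          exact fun h => hZne _ _ h.symm),
        Finset.card_singleton]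
  · intro S T hS hT h
    ext i
    rw [← hmemiff i S, ← hmemiff i T, h]
  · intro i S hS hiS
    obtain ⟨a, b, hab, rfl⟩ := pair_lt S hS
    rw [hgS a b hab]
    simp only [Finset.mem_insert, Finset.mem_singleton] at hiS
    rcases hiS with rfl | rfl
    · exact (hcol i b hab).1
    · exact (hcol a i hab).2

set_option maxHeartbeats 3200000 in
/-- Induced `B_{4,2}` Ramsey theorem: if `n` is large enough that every
6-coloring of the 3-subsets of `[n]` admits a homogeneous set of size 9, then
every 2-coloring of the edges of `B_{n,3}` contains an induced monochromatic
copy of `B_{4,2}`. -/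
theorem stmt_4 (n : ℕ)
    (hR : ∀ col : Finset ℕ → Fin 6,
      ∃ H : Finset ℕ, H ⊆ Finset.Icc 1 n ∧ H.card = 9 ∧
        ∃ c0, ∀ X ⊆ H, X.card = 3 → col X = c0)
    (COL : ℕ → Finset ℕ → Fin 2) :
    ∃ (f : Fin 4 → ℕ) (g : Finset (Fin 4) → Finset ℕ) (c : Fin 2),
      Function.Injective f ∧ (∀ i, f i ∈ Finset.Icc 1 n) ∧
      (∀ S : Finset (Fin 4), S.card = 2 →
        g S ⊆ Finset.Icc 1 n ∧ (g S).card = 3) ∧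
      (∀ S T : Finset (Fin 4), S.card = 2 → T.card = 2 → g S = g T → S = T) ∧
      (∀ (i : Fin 4) (S : Finset (Fin 4)), S.card = 2 → (f i ∈ g S ↔ i ∈ S)) ∧
      (∀ (i : Fin 4) (S : Finset (Fin 4)), S.card = 2 → i ∈ S →
        COL (f i) (g S) = c) := by
  obtain ⟨H, hHsub, hHcard, c0, hhom⟩ := hR (fun X =>
    ⟨2 * ((pv COL X).1 : ℕ) + ((pv COL X).2 : ℕ), by
      have h1 := (pv COL X).1.isLt
      have h2 := (pv COL X).2.isLt
      omega⟩)
  set cc : Fin 2 := ⟨c0.val % 2, Nat.mod_lt _ (by omega)⟩ with hcc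
  set j : ℕ := c0.val / 2 with hj
  have key : ∀ X ⊆ H, X.card = 3 →
      ((pv COL X).1 : ℕ) = j ∧ (pv COL X).2 = cc := by
    intro X hX hX3
    have := hhom X hX hX3
    have hval : 2 * ((pv COL X).1 : ℕ) + ((pv COL X).2 : ℕ) = c0.val :=
      congrArg Fin.val this
    have h1 := (pv COL X).1.isLt
    have h2 := (pv COL X).2.isLt
    constructor
    · omega
    · apply Fin.ext
      show ((pv COL X).2 : ℕ) = c0.val % 2
      omega
  set e : Fin 9 ↪o ℕ := H.orderEmbOfFin hHcard with he
  have heH : ∀ i, e i ∈ H := fun i => H.orderEmbOfFin_mem hHcard i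
  have heIcc : ∀ i, e i ∈ Finset.Icc 1 n := fun i => hHsub (heH i)
  have hemono : StrictMono e := e.strictMono
  have colX : ∀ x y z : Fin 9, x < y → y < z →
      ((pv COL {e x, e y, e z}).1 : ℕ) = j ∧ (pv COL {e x, e y, e z}).2 = cc := by
    intro x y z hxy hyz
    apply key
    · intro w hw
      simp only [Finset.mem_insert, Finset.mem_singleton] at hw
      rcases hw with rfl | rfl | rfl <;> exact heH _
    · exact card_triple (hemono hxy) (hemono hyz)
  have hjlt : j < 3 := by have := c0.isLt; omega
  have hj3 : j = 0 ∨ j = 1 ∨ j = 2 := by omega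
  rcases hj3 with hj0 | hj1 | hj2
  · -- z is the largest element: F i = e i, Z = e 8
    apply assemble n COL cc (fun i => e ⟨i, by omega⟩) (fun _ => e 8)
    · intro a b hab
      exact hemono (show (⟨a.val, by omega⟩ : Fin 9) < ⟨b.val, by omega⟩ from hab)
    · intro i; exact heIcc _
    · intro S _; exact heIcc _
    · intro S i h
      have h8 : (8 : Fin 9).val = (⟨i, by omega⟩ : Fin 9).val := congrArg Fin.val (hemono.injective h)
      have := i.isLt
      simp only [Fin.val_mk] at h8
      have h8' : (8 : Fin 9).val = 8 := rfl
      omega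
    · intro a b hab
      have h1 : (⟨a, by omega⟩ : Fin 9) < ⟨b, by omega⟩ := hab
      have h2 : (⟨b, by omega⟩ : Fin 9) < 8 := by
        rw [Fin.lt_def]; show b.val < 8; omega
      obtain ⟨hp, hv⟩ := colX _ _ _ h1 h2
      rw [hj0] at hp
      exact pv_spec0 COL (hemono h1) (hemono h2) cc rfl hp hv
  · -- z is the middle element: F i = e (2i+2), Z {a,b} = e (2a+3)
    apply assemble n COL cc (fun i => e ⟨2 * i + 2, by omega⟩)
      (fun S => e ⟨2 * min ((S.inf id) : Fin 4).val 2 + 3, by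
        have := Nat.min_le_right ((S.inf id) : Fin 4).val 2; omega⟩)
    · intro a b hab
      exact hemono (show ((2 * a.val + 2 : ℕ) : ℕ) < 2 * b.val + 2 by
        have : a.val < b.val := hab; omega)
    · intro i; exact heIcc _
    · intro S _; exact heIcc _
    · intro S i h
      have hv : (⟨2 * min ((S.inf id) : Fin 4).val 2 + 3, by
          have := Nat.min_le_right ((S.inf id) : Fin 4).val 2; omega⟩ : Fin 9).val
          = (⟨2 * i + 2, by omega⟩ : Fin 9).val := congrArg Fin.val (hemono.injective h)
      simp only [Fin.val_mk] at hv
      omega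
    · intro a b hab
      have hab' : a.val < b.val := hab
      have hb3 : b.val ≤ 3 := by omega
      have hZab : (({a, b} : Finset (Fin 4)).inf id : Fin 4).val = a.val := by
        rw [Finset.inf_insert, Finset.inf_singleton, id, id]
        rw [inf_eq_left.mpr hab.le]
      have hmin : min ((({a, b} : Finset (Fin 4)).inf id) : Fin 4).val 2 = a.val := by
        rw [hZab]; omega
      have hZeq : (⟨2 * min ((({a, b} : Finset (Fin 4)).inf id) : Fin 4).val 2 + 3, by
          have := Nat.min_le_right ((({a, b} : Finset (Fin 4)).inf id) : Fin 4).val 2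
          omega⟩ : Fin 9) = ⟨2 * a.val + 3, by omega⟩ := by
        apply Fin.ext
        simp only [Fin.val_mk]
        omega
      have h1 : (⟨2 * a + 2, by omega⟩ : Fin 9) < ⟨2 * a + 3, by omega⟩ := by
        rw [Fin.lt_def]; show 2 * a.val + 2 < 2 * a.val + 3; omega
      have h2 : (⟨2 * a + 3, by omega⟩ : Fin 9) < ⟨2 * b + 2, by omega⟩ := by
        rw [Fin.lt_def]; show 2 * a.val + 3 < 2 * b.val + 2; omega
      obtain ⟨hp, hv⟩ := colX _ _ _ h1 h2
      rw [hj1] at hp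
      simp only [hZeq]
      have hset : ({e ⟨2 * a + 2, by omega⟩, e ⟨2 * b + 2, by omega⟩,
            e ⟨2 * a.val + 3, by omega⟩} : Finset ℕ)
          = {e ⟨2 * a + 2, by omega⟩, e ⟨2 * a + 3, by omega⟩, e ⟨2 * b + 2, by omega⟩} := by
        ext x
        simp only [Finset.mem_insert, Finset.mem_singleton]
        tauto
      rw [hset]
      exact pv_spec1 COL (hemono h1) (hemono h2) cc rfl hp hv
  · -- z is the smallest element: F i = e (i+1), Z = e 0
    apply assemble n COL cc (fun i => e ⟨i + 1, by omega⟩) (fun _ => e 0)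
    · intro a b hab
      exact hemono (by rw [Fin.lt_def]; show a.val + 1 < b.val + 1; have : a.val < b.val := hab; omega)
    · intro i; exact heIcc _
    · intro S _; exact heIcc _
    · intro S i h
      have h0 : (0 : Fin 9).val = (⟨i + 1, by omega⟩ : Fin 9).val := congrArg Fin.val (hemono.injective h)
      simp only [Fin.val_mk] at h0
      have h0' : (0 : Fin 9).val = 0 := rfl
      omega
    · intro a b hab
      have hab' : a.val < b.val := hab
      have h1 : (0 : Fin 9) < ⟨a + 1, by omega⟩ := by
        rw [Fin.lt_def]; show (0 : Fin 9).val < a.val + 1; exact Nat.succ_pos _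
      have h2 : (⟨a + 1, by omega⟩ : Fin 9) < ⟨b + 1, by omega⟩ := by
        rw [Fin.lt_def]; show a.val + 1 < b.val + 1; omega
      obtain ⟨hp, hv⟩ := colX _ _ _ h1 h2
      rw [hj2] at hp
      have hset : ({e ⟨a + 1, by omega⟩, e ⟨b + 1, by omega⟩, e 0} : Finset ℕ)
          = {e 0, e ⟨a + 1, by omega⟩, e ⟨b + 1, by omega⟩} := by
        ext x
        simp only [Finset.mem_insert, Finset.mem_singleton]
        tauto
      rw [hset]
      exact pv_spec2 COL (hemono h1) (hemono h2) cc rfl hp hv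
end

section
/- Suppose COL is a 2-coloring of the edges of B_{n,3} with n ≥ 9, and suppose that for every 3-element subset X = {z₁ < z₂ < z₃} of [9], the edges (z₁, X) and (z₃, X) are both colored red. Then the left vertices {2,4,6,8} together with the right vertices {2,3,4}, {2,3,6}, {2,3,8}, {4,5,6}, {4,5,8}, {6,7,8} induce in B_{n,3} a subgraph isomorphic to B_{4,2}, all of whose edges are red. -/
/-- Case `(i,j) = (1,3)`: if for every 3-subset `{z₁ < z₂ < z₃}` of `[9]` the
edges `(z₁,X)` and `(z₃,X)` are red (color 0), then the left vertices
`{2,4,6,8}` together with the listed six 3-sets induce a red copy of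
`B_{4,2}`. -/
theorem stmt_5 (n : ℕ) (hn : 9 ≤ n) (COL : ℕ → Finset ℕ → Fin 2)
    (hred : ∀ z₁ z₂ z₃ : ℕ, 1 ≤ z₁ → z₁ < z₂ → z₂ < z₃ → z₃ ≤ 9 →
      COL z₁ ({z₁, z₂, z₃} : Finset ℕ) = 0 ∧ COL z₃ ({z₁, z₂, z₃} : Finset ℕ) = 0) :
    ∀ X ∈ ({{2,3,4},{2,3,6},{2,3,8},{4,5,6},{4,5,8},{6,7,8}} : Finset (Finset ℕ)),
      (X ∩ ({2,4,6,8} : Finset ℕ)).card = 2 ∧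
      (∀ Y ∈ ({{2,3,4},{2,3,6},{2,3,8},{4,5,6},{4,5,8},{6,7,8}} : Finset (Finset ℕ)),
        X ∩ ({2,4,6,8} : Finset ℕ) = Y ∩ ({2,4,6,8} : Finset ℕ) → X = Y) ∧
      (∀ x ∈ ({2,4,6,8} : Finset ℕ), x ∈ X → COL x X = 0) := by
  have h1 := hred 2 3 4 (by norm_num) (by norm_num) (by norm_num) (by norm_num)
  have h2 := hred 2 3 6 (by norm_num) (by norm_num) (by norm_num) (by norm_num)
  have h3 := hred 2 3 8 (by norm_num) (by norm_num) (by norm_num) (by norm_num)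
  have h4 := hred 4 5 6 (by norm_num) (by norm_num) (by norm_num) (by norm_num)
  have h5 := hred 4 5 8 (by norm_num) (by norm_num) (by norm_num) (by norm_num)
  have h6 := hred 6 7 8 (by norm_num) (by norm_num) (by norm_num) (by norm_num)
  intro X hX
  fin_cases hX <;>
    refine ⟨by decide, by decide, ?_⟩ <;>
    intro x hx hxX <;> fin_cases hx <;> simp_all
end

section
/- Let b ≤ a be positive integers, let s = ab + b − 1, and let n = R_{2b−1, 2·C(2b−1,b)}(s) be the corresponding hypergraph Ramsey number. Then for every 2-coloring of the edges of B_{n,2b−1}, there exists an induced monochromatic copy of B_{a,b}: a set of a left vertices and C(a,b) right vertices of B_{n,2b−1} inducing a subgraph isomorphic to B_{a,b} with all edges the same color. -/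
open Finset

/-! ### Auxiliary machinery -/

/-- For a strictly monotone `f : Fin m → ℕ`, values grow at least linearly. -/
lemma sm_le {m : ℕ} {f : Fin m → ℕ} (hf : StrictMono f) :
    ∀ (k : ℕ) (u v : Fin m), (v : ℕ) = (u : ℕ) + k → f u + k ≤ f v := by
  intro k
  induction k with
  | zero =>
      intro u v h
      have : u = v := Fin.ext (by omega)
      rw [this]
      omega
  | succ k ih =>
      intro u v h
      have hvlt := v.isLt
      have h1 := ih u ⟨(u : ℕ) + k, by omega⟩ rfl
      have h2 : f ⟨(u : ℕ) + k, by omega⟩ < f v := hf (by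
        show ((⟨(u : ℕ) + k, by omega⟩ : Fin m) : ℕ) < (v : ℕ)
        simp only []
        omega)
      omega

/-- Rank of `q` among the values of `β`. -/
def rnk (b : ℕ) (β : Fin b → ℕ) (q : ℕ) : ℕ :=
  (Finset.univ.filter fun u : Fin b => β u < q).card

lemma rnk_le (b : ℕ) (β : Fin b → ℕ) (q : ℕ) : rnk b β q ≤ b :=
  le_trans (Finset.card_filter_le _ _) (by simp)

lemma lt_rnk_iff {b : ℕ} {β : Fin b → ℕ} (hβ : StrictMono β) (q : ℕ) (u : Fin b) :
    (u : ℕ) < rnk b β q ↔ β u < q := by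
  constructor
  · intro h
    by_contra hc
    push_neg at hc
    have hsub : (Finset.univ.filter fun v : Fin b => β v < q) ⊆ Finset.Iio u := by
      intro v hv
      rw [Finset.mem_filter] at hv
      rw [Finset.mem_Iio]
      by_contra hvu
      push_neg at hvu
      exact absurd hv.2 (not_lt.2 (le_trans hc (hβ.monotone hvu)))
    have hcard := Finset.card_le_card hsub
    rw [Fin.card_Iio] at hcard
    unfold rnk at h
    omega
  · intro h
    have hsub : Finset.Iic u ⊆ Finset.univ.filter fun v : Fin b => β v < q := by
      intro v hv
      simp only [Finset.mem_filter, Finset.mem_univ, true_and]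
      exact lt_of_le_of_lt (hβ.monotone (Finset.mem_Iic.mp hv)) h
    have hcard := Finset.card_le_card hsub
    rw [Fin.card_Iic] at hcard
    unfold rnk
    omega

lemma rnk_beta {b : ℕ} {β : Fin b → ℕ} (hβ : StrictMono β) (u : Fin b) :
    rnk b β (β u) = (u : ℕ) := by
  have h1 : ¬ ((u : ℕ) < rnk b β (β u)) := by
    rw [lt_rnk_iff hβ]; omega
  rcases Nat.lt_or_ge (rnk b β (β u)) (u : ℕ) with h | h
  · exfalso
    have hlt : rnk b β (β u) < b := lt_trans h u.isLt
    have hw : β ⟨rnk b β (β u), hlt⟩ < β u := hβ (by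
      show (⟨rnk b β (β u), hlt⟩ : Fin b) < u
      exact Fin.mk_lt_mk.mpr (by omega) |>.trans_le (le_refl u) |>.trans_le (le_refl u))
    have := (lt_rnk_iff hβ (β u) ⟨rnk b β (β u), hlt⟩).mpr hw
    simp only [] at this
    omega
  · omega

lemma rnk_mono (b : ℕ) (β : Fin b → ℕ) {q q' : ℕ} (h : q ≤ q') :
    rnk b β q ≤ rnk b β q' := by
  apply Finset.card_le_card
  intro v hv
  simp only [Finset.mem_filter, Finset.mem_univ, true_and] at hv ⊢
  omega

lemma beta_lower {b : ℕ} {β : Fin b → ℕ} (hβ : StrictMono β) (u : Fin b) :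
    (u : ℕ) ≤ β u := by
  have h0 : 0 < b := u.pos
  have := sm_le hβ (u : ℕ) ⟨0, h0⟩ u (by simp)
  omega

lemma beta_upper {b : ℕ} {β : Fin b → ℕ} (hβ : StrictMono β)
    (hβlt : ∀ u, β u < 2 * b - 1) (u : Fin b) : β u ≤ b - 1 + (u : ℕ) := by
  have h0 : 0 < b := u.pos
  have h1 := sm_le hβ (b - 1 - (u : ℕ)) u ⟨b - 1, by omega⟩
    (by show b - 1 = (u : ℕ) + (b - 1 - (u : ℕ)); have := u.isLt; omega)
  have h2 := hβlt ⟨b - 1, by omega⟩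
  omega

lemma rnk_le_q {b : ℕ} {β : Fin b → ℕ} (hβ : StrictMono β) (q : ℕ) :
    rnk b β q ≤ q := by
  rcases Nat.eq_zero_or_pos (rnk b β q) with h | h
  · omega
  · have hb : rnk b β q ≤ b := rnk_le b β q
    have hlt : rnk b β q - 1 < b := by omega
    have h2 : β ⟨rnk b β q - 1, hlt⟩ < q :=
      (lt_rnk_iff hβ q _).mp (by show rnk b β q - 1 < rnk b β q; omega)
    have h3 := beta_lower hβ ⟨rnk b β q - 1, hlt⟩
    simp only [] at h3
    omega

lemma le_beta_rnk {b : ℕ} {β : Fin b → ℕ} (hβ : StrictMono β) {q : ℕ}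
    (h : rnk b β q < b) : q ≤ β ⟨rnk b β q, h⟩ := by
  by_contra hc
  push_neg at hc
  have := (lt_rnk_iff hβ q ⟨rnk b β q, h⟩).mpr hc
  simp only [] at this
  omega

/-- The index map: positions in `Fin (2b-1)` to indices in the homogeneous set. -/
def phi {b : ℕ} (hb : 0 < b) (β σ : Fin b → ℕ) (q : ℕ) : ℕ :=
  if h : rnk b β q < b then
    b * (σ ⟨rnk b β q, h⟩ + 1) - 1 - (β ⟨rnk b β q, h⟩ - q)
  else
    b * (σ ⟨b - 1, Nat.sub_lt hb Nat.one_pos⟩ + 1) - 1 + (q - β ⟨b - 1, Nat.sub_lt hb Nat.one_pos⟩)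

lemma phi_beta {b : ℕ} (hb : 0 < b) {β : Fin b → ℕ} (hβ : StrictMono β)
    (σ : Fin b → ℕ) (u : Fin b) : phi hb β σ (β u) = b * (σ u + 1) - 1 := by
  unfold phi
  have h := rnk_beta hβ u
  simp only [h, Fin.eta, u.isLt, dif_pos]
  omega

section PhiLemmas

variable {a b : ℕ} {β σ : Fin b → ℕ}

lemma phi_mono (hb : 0 < b) (hβ : StrictMono β) (hβlt : ∀ u, β u < 2 * b - 1)
    (hσ : StrictMono σ) {q q' : ℕ} (hqq' : q < q') (hq' : q' ≤ 2 * b - 2) :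
    phi hb β σ q < phi hb β σ q' := by
  have htm : rnk b β q ≤ rnk b β q' := rnk_mono b β (le_of_lt hqq')
  have ht'b : rnk b β q' ≤ b := rnk_le b β q'
  unfold phi
  by_cases h : rnk b β q < b
  · have hqβ : q ≤ β ⟨rnk b β q, h⟩ := le_beta_rnk hβ h
    have hβub : β ⟨rnk b β q, h⟩ ≤ b - 1 + rnk b β q := beta_upper hβ hβlt _
    have htq : rnk b β q ≤ q := rnk_le_q hβ q
    rw [dif_pos h]
    by_cases h' : rnk b β q' < b
    · have hq'β : q' ≤ β ⟨rnk b β q', h'⟩ := le_beta_rnk hβ h'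
      have hβub' : β ⟨rnk b β q', h'⟩ ≤ b - 1 + rnk b β q' := beta_upper hβ hβlt _
      have htq' : rnk b β q' ≤ q' := rnk_le_q hβ q'
      rw [dif_pos h']
      rcases Nat.eq_or_lt_of_le htm with heq | hlt
      · -- same rank
        have hbeq : β ⟨rnk b β q, h⟩ = β ⟨rnk b β q', h'⟩ := by congr 1; exact Fin.ext heq
        have hseq : σ ⟨rnk b β q, h⟩ = σ ⟨rnk b β q', h'⟩ := by congr 1; exact Fin.ext heq
        have hX : b * 1 ≤ b * (σ ⟨rnk b β q, h⟩ + 1) := Nat.mul_le_mul_left b (by omega)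
        rw [← hbeq, ← hseq]
        omega
      · -- rank increases
        have hsp := sm_le hσ (rnk b β q' - rnk b β q) ⟨rnk b β q, h⟩ ⟨rnk b β q', h'⟩
          (by show rnk b β q' = rnk b β q + (rnk b β q' - rnk b β q); omega)
        have hm1 : b * (σ ⟨rnk b β q, h⟩ + 1) + b ≤ b * (σ ⟨rnk b β q', h'⟩ + 1) := by
          have h1 : b * ((σ ⟨rnk b β q, h⟩ + 1) + 1) ≤ b * (σ ⟨rnk b β q', h'⟩ + 1) :=
            Nat.mul_le_mul_left b (by omega)
          rw [Nat.mul_succ] at h1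
          exact h1
        have hX : b * 1 ≤ b * (σ ⟨rnk b β q, h⟩ + 1) := Nat.mul_le_mul_left b (by omega)
        omega
    · -- rnk q < b = rnk q'
      have ht' : rnk b β q' = b := by omega
      rw [dif_neg h']
      have hβq' : β ⟨b - 1, Nat.sub_lt hb Nat.one_pos⟩ < q' :=
        (lt_rnk_iff hβ q' ⟨b - 1, Nat.sub_lt hb Nat.one_pos⟩).mp (by simp only []; omega)
      have hsp := sm_le hσ (b - 1 - rnk b β q) ⟨rnk b β q, h⟩ ⟨b - 1, Nat.sub_lt hb Nat.one_pos⟩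
        (by show b - 1 = rnk b β q + (b - 1 - rnk b β q); omega)
      have hm1 : b * (σ ⟨rnk b β q, h⟩ + 1) ≤ b * (σ ⟨b - 1, Nat.sub_lt hb Nat.one_pos⟩ + 1) :=
        Nat.mul_le_mul_left b (by omega)
      have hX : b * 1 ≤ b * (σ ⟨rnk b β q, h⟩ + 1) := Nat.mul_le_mul_left b (by omega)
      omega
  · -- both ranks = b
    have ht : rnk b β q = b := by have := rnk_le b β q; omega
    have ht' : rnk b β q' = b := by omega
    rw [dif_neg h, dif_neg (by omega)]
    have hβq : β ⟨b - 1, Nat.sub_lt hb Nat.one_pos⟩ < q :=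
      (lt_rnk_iff hβ q ⟨b - 1, Nat.sub_lt hb Nat.one_pos⟩).mp (by simp only []; omega)
    omega

lemma phi_lt (hb : 0 < b) (hba : b ≤ a) (hβ : StrictMono β)
    (hβlt : ∀ u, β u < 2 * b - 1) (hσlt : ∀ u, σ u < a) {q : ℕ} (hq : q ≤ 2 * b - 2) :
    phi hb β σ q < a * b + b - 1 := by
  have hab : b * a = a * b := Nat.mul_comm b a
  have hba1 : b ≤ a * b := by
    have := Nat.mul_le_mul_left b hba
    rw [Nat.mul_comm b a] at this
    have h1 : b * 1 ≤ b * b := Nat.mul_le_mul_left b hb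
    omega
  unfold phi
  by_cases h : rnk b β q < b
  · rw [dif_pos h]
    have hm : b * (σ ⟨rnk b β q, h⟩ + 1) ≤ b * a := Nat.mul_le_mul_left b (hσlt _)
    have hX : b * 1 ≤ b * (σ ⟨rnk b β q, h⟩ + 1) := Nat.mul_le_mul_left b (by omega)
    omega
  · rw [dif_neg h]
    have hm : b * (σ ⟨b - 1, Nat.sub_lt hb Nat.one_pos⟩ + 1) ≤ b * a := Nat.mul_le_mul_left b (hσlt _)
    have hX : b * 1 ≤ b * (σ ⟨b - 1, Nat.sub_lt hb Nat.one_pos⟩ + 1) := Nat.mul_le_mul_left b (by omega)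
    have hlow := beta_lower hβ ⟨b - 1, Nat.sub_lt hb Nat.one_pos⟩
    simp only [] at hlow
    omega

lemma phi_eq_target (hb : 0 < b) (hβ : StrictMono β) (hβlt : ∀ u, β u < 2 * b - 1)
    {q i : ℕ} (hq : q ≤ 2 * b - 2) (h : phi hb β σ q = b * (i + 1) - 1) :
    ∃ u : Fin b, σ u = i ∧ q = β u := by
  unfold phi at h
  by_cases ht : rnk b β q < b
  · rw [dif_pos ht] at h
    have hqβ : q ≤ β ⟨rnk b β q, ht⟩ := le_beta_rnk hβ ht
    have hβub : β ⟨rnk b β q, ht⟩ ≤ b - 1 + rnk b β q := beta_upper hβ hβlt _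
    have htq : rnk b β q ≤ q := rnk_le_q hβ q
    have hX : b * 1 ≤ b * (σ ⟨rnk b β q, ht⟩ + 1) := Nat.mul_le_mul_left b (by omega)
    have hQ : b * 1 ≤ b * (i + 1) := Nat.mul_le_mul_left b (by omega)
    rcases le_or_gt (σ ⟨rnk b β q, ht⟩) i with hc | hc
    · have hm : b * (σ ⟨rnk b β q, ht⟩ + 1) ≤ b * (i + 1) := Nat.mul_le_mul_left b (by omega)
      have heq : b * (σ ⟨rnk b β q, ht⟩ + 1) = b * (i + 1) := by omega
      have hσi : σ ⟨rnk b β q, ht⟩ = i := by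
        have := Nat.eq_of_mul_eq_mul_left hb heq
        omega
      have hqeq : q = β ⟨rnk b β q, ht⟩ := by omega
      exact ⟨⟨rnk b β q, ht⟩, hσi, hqeq⟩
    · exfalso
      have hm : b * (i + 1) + b ≤ b * (σ ⟨rnk b β q, ht⟩ + 1) := by
        have h1 : b * (i + 1 + 1) ≤ b * (σ ⟨rnk b β q, ht⟩ + 1) :=
          Nat.mul_le_mul_left b (by omega)
        rw [Nat.mul_add, Nat.mul_one] at h1
        omega
      omega
  · exfalso
    rw [dif_neg ht] at h
    have htb : rnk b β q = b := by have := rnk_le b β q; omega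
    have hβq : β ⟨b - 1, Nat.sub_lt hb Nat.one_pos⟩ < q :=
      (lt_rnk_iff hβ q ⟨b - 1, Nat.sub_lt hb Nat.one_pos⟩).mp (by simp only []; omega)
    have hlow := beta_lower hβ ⟨b - 1, Nat.sub_lt hb Nat.one_pos⟩
    simp only [] at hlow
    have hX : b * 1 ≤ b * (σ ⟨b - 1, Nat.sub_lt hb Nat.one_pos⟩ + 1) := Nat.mul_le_mul_left b (by omega)
    have hQ : b * 1 ≤ b * (i + 1) := Nat.mul_le_mul_left b (by omega)
    rcases le_or_gt i (σ ⟨b - 1, Nat.sub_lt hb Nat.one_pos⟩) with hc | hc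
    · have hm : b * (i + 1) ≤ b * (σ ⟨b - 1, Nat.sub_lt hb Nat.one_pos⟩ + 1) := Nat.mul_le_mul_left b (by omega)
      omega
    · have hm : b * (σ ⟨b - 1, Nat.sub_lt hb Nat.one_pos⟩ + 1) + b ≤ b * (i + 1) := by
        have h1 : b * (σ ⟨b - 1, Nat.sub_lt hb Nat.one_pos⟩ + 1 + 1) ≤ b * (i + 1) :=
          Nat.mul_le_mul_left b (by omega)
        rw [Nat.mul_add, Nat.mul_one] at h1
        omega
      omega

end PhiLemmas

/-! ### The coloring of `(2b-1)`-subsets -/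

lemma exists_mono_pattern (b : ℕ) (hb : 0 < b) (COL : ℕ → Finset ℕ → Fin 2)
    (X : Finset ℕ) (hX : X.card = 2 * b - 1) :
    ∃ p : Fin 2 × {s : Finset (Fin (2 * b - 1)) // s.card = b},
      ∀ q ∈ p.2.1, COL (X.orderEmbOfFin hX q) X = p.1 := by
  classical
  set P0 : Finset (Fin (2 * b - 1)) :=
    Finset.univ.filter fun q => COL (X.orderEmbOfFin hX q) X = 0 with hP0
  by_cases h : b ≤ P0.card
  · obtain ⟨B, hBsub, hBcard⟩ := Finset.exists_subset_card_eq h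
    exact ⟨(0, ⟨B, hBcard⟩), fun q hq => (Finset.mem_filter.mp (hBsub hq)).2⟩
  · have hcard : P0.card +
        (Finset.univ.filter fun q : Fin (2 * b - 1) =>
          ¬ COL (X.orderEmbOfFin hX q) X = 0).card = 2 * b - 1 := by
      rw [hP0, Finset.card_filter_add_card_filter_not]
      simp
    have h1 : b ≤ (Finset.univ.filter fun q : Fin (2 * b - 1) =>
        ¬ COL (X.orderEmbOfFin hX q) X = 0).card := by omega
    obtain ⟨B, hBsub, hBcard⟩ := Finset.exists_subset_card_eq h1
    have hone : ∀ x : Fin 2, x ≠ 0 → x = 1 := by decide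
    exact ⟨(1, ⟨B, hBcard⟩), fun q hq =>
      hone _ (Finset.mem_filter.mp (hBsub hq)).2⟩

noncomputable def patB (b : ℕ) (hb : 0 < b) (COL : ℕ → Finset ℕ → Fin 2)
    (X : Finset ℕ) (hX : X.card = 2 * b - 1) :
    Fin 2 × {s : Finset (Fin (2 * b - 1)) // s.card = b} :=
  (exists_mono_pattern b hb COL X hX).choose

lemma patB_spec (b : ℕ) (hb : 0 < b) (COL : ℕ → Finset ℕ → Fin 2)
    (X : Finset ℕ) (hX : X.card = 2 * b - 1) :
    ∀ q ∈ (patB b hb COL X hX).2.1,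
      COL (X.orderEmbOfFin hX q) X = (patB b hb COL X hX).1 :=
  (exists_mono_pattern b hb COL X hX).choose_spec

lemma patCard (b : ℕ) :
    Fintype.card (Fin 2 × {s : Finset (Fin (2 * b - 1)) // s.card = b})
      = 2 * Nat.choose (2 * b - 1) b := by
  simp

noncomputable def colF (b : ℕ) (hb : 0 < b) (COL : ℕ → Finset ℕ → Fin 2)
    (X : Finset ℕ) : Fin (2 * Nat.choose (2 * b - 1) b) :=
  if hX : X.card = 2 * b - 1 then
    Fintype.equivFinOfCardEq (patCard b) (patB b hb COL X hX)
  else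
    ⟨0, by
      have h1 := Nat.choose_pos (show b ≤ 2 * b - 1 by omega)
      omega⟩

lemma colF_inj (b : ℕ) (hb : 0 < b) (COL : ℕ → Finset ℕ → Fin 2)
    {X Y : Finset ℕ} (hX : X.card = 2 * b - 1) (hY : Y.card = 2 * b - 1)
    (h : colF b hb COL X = colF b hb COL Y) :
    patB b hb COL X hX = patB b hb COL Y hY := by
  unfold colF at h
  rw [dif_pos hX, dif_pos hY] at h
  exact (Fintype.equivFinOfCardEq (patCard b)).injective h

/-- Induced `B_{a,b}` Ramsey theorem: with `s = ab + b - 1` and `n` large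
enough that every `2·C(2b-1,b)`-coloring of the `(2b-1)`-subsets of `[n]`
admits a homogeneous set of size `s`, every 2-coloring of the edges of
`B_{n,2b-1}` contains an induced monochromatic copy of `B_{a,b}`. -/
theorem stmt_6 (a b n : ℕ) (hb : 0 < b) (hba : b ≤ a)
    (hR : ∀ col : Finset ℕ → Fin (2 * Nat.choose (2 * b - 1) b),
      ∃ H : Finset ℕ, H ⊆ Finset.Icc 1 n ∧ H.card = a * b + b - 1 ∧
        ∃ c0, ∀ X ⊆ H, X.card = 2 * b - 1 → col X = c0)
    (COL : ℕ → Finset ℕ → Fin 2) :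
    ∃ (f : Fin a → ℕ) (g : Finset (Fin a) → Finset ℕ) (c : Fin 2),
      Function.Injective f ∧ (∀ i, f i ∈ Finset.Icc 1 n) ∧
      (∀ S : Finset (Fin a), S.card = b →
        g S ⊆ Finset.Icc 1 n ∧ (g S).card = 2 * b - 1) ∧
      (∀ S T : Finset (Fin a), S.card = b → T.card = b → g S = g T → S = T) ∧
      (∀ (i : Fin a) (S : Finset (Fin a)), S.card = b → (f i ∈ g S ↔ i ∈ S)) ∧
      (∀ (i : Fin a) (S : Finset (Fin a)), S.card = b → i ∈ S →
        COL (f i) (g S) = c) := by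
  classical
  obtain ⟨H, hHsub, hHcard, c0, hc0⟩ := hR (colF b hb COL)
  have ha : 0 < a := lt_of_lt_of_le hb hba
  have hba1 : b ≤ a * b := Nat.le_mul_of_pos_left b ha
  have h2b : 2 * b - 1 ≤ H.card := by rw [hHcard]; omega
  obtain ⟨X₀, hX₀sub, hX₀card⟩ := Finset.exists_subset_card_eq h2b
  have hpat' : ∃ (ε : Fin 2) (B : Finset (Fin (2 * b - 1))), B.card = b ∧
      ∀ (X : Finset ℕ), X ⊆ H → ∀ (hX : X.card = 2 * b - 1),
        ∀ q ∈ B, COL (X.orderEmbOfFin hX q) X = ε := by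
    refine ⟨(patB b hb COL X₀ hX₀card).1, (patB b hb COL X₀ hX₀card).2.1,
      (patB b hb COL X₀ hX₀card).2.2, ?_⟩
    intro X hsub hX q hq
    have h1 : colF b hb COL X = colF b hb COL X₀ := by
      rw [hc0 X hsub hX, hc0 X₀ hX₀sub hX₀card]
    have h2 := colF_inj b hb COL hX hX₀card h1
    have h3 := patB_spec b hb COL X hX q (by rw [h2]; exact hq)
    rw [h2] at h3
    exact h3
  obtain ⟨ε, B, hB, hpat⟩ := hpat'
  -- the increasing enumeration of H and of B
  let e := H.orderEmbOfFin hHcard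
  let β : Fin b → ℕ := fun u => ((B.orderEmbOfFin hB u : Fin (2 * b - 1)) : ℕ)
  have hβ : StrictMono β := fun u v huv => (B.orderEmbOfFin hB).strictMono huv
  have hβlt : ∀ u, β u < 2 * b - 1 := fun u => (B.orderEmbOfFin hB u).isLt
  -- distinguished indices
  have hidx : ∀ i : Fin a, b * ((i : ℕ) + 1) - 1 < a * b + b - 1 := by
    intro i
    have h1 : b * ((i : ℕ) + 1) ≤ b * a := Nat.mul_le_mul_left b i.isLt
    have h2 : b * 1 ≤ b * ((i : ℕ) + 1) := Nat.mul_le_mul_left b (by omega)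
    have h3 : b * a = a * b := Nat.mul_comm b a
    omega
  let f : Fin a → ℕ := fun i => (e ⟨b * ((i : ℕ) + 1) - 1, hidx i⟩ : ℕ)
  let σf : (S : Finset (Fin a)) → S.card = b → Fin b → ℕ :=
    fun S hS u => ((S.orderEmbOfFin hS u : Fin a) : ℕ)
  have hσm : ∀ S hS, StrictMono (σf S hS) :=
    fun S hS u v huv => (S.orderEmbOfFin hS).strictMono huv
  have hσl : ∀ S hS u, σf S hS u < a := fun S hS u => (S.orderEmbOfFin hS u).isLt
  have hbnd : ∀ (S : Finset (Fin a)) (hS : S.card = b) (q : Fin (2 * b - 1)),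
      phi hb β (σf S hS) (q : ℕ) < a * b + b - 1 :=
    fun S hS q => phi_lt hb hba hβ hβlt (hσl S hS) (by have := q.isLt; omega)
  let gm : (S : Finset (Fin a)) → S.card = b → Fin (2 * b - 1) → ℕ :=
    fun S hS q => (e ⟨phi hb β (σf S hS) (q : ℕ), hbnd S hS q⟩ : ℕ)
  let g : Finset (Fin a) → Finset ℕ := fun S =>
    if hS : S.card = b then Finset.image (gm S hS) Finset.univ else ∅
  have gval : ∀ S (hS : S.card = b), g S = Finset.image (gm S hS) Finset.univ :=
    fun S hS => dif_pos hS
  have hgmono : ∀ S hS, StrictMono (gm S hS) := by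
    intro S hS q q' hqq'
    apply e.strictMono
    exact Fin.mk_lt_mk.mpr
      (phi_mono hb hβ hβlt (hσm S hS) (Fin.lt_def.mp hqq') (by have := q'.isLt; omega))
  have hgcard : ∀ S (hS : S.card = b), (g S).card = 2 * b - 1 := by
    intro S hS
    rw [gval S hS, Finset.card_image_of_injective _ (hgmono S hS).injective,
      Finset.card_univ, Fintype.card_fin]
  have hgsub : ∀ S (hS : S.card = b), g S ⊆ H := by
    intro S hS
    rw [gval S hS]
    intro x hx
    obtain ⟨q, -, rfl⟩ := Finset.mem_image.mp hx
    exact Finset.orderEmbOfFin_mem H hHcard _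
  have hemb : ∀ S (hS : S.card = b) (q : Fin (2 * b - 1)),
      (g S).orderEmbOfFin (hgcard S hS) q = gm S hS q := by
    intro S hS q
    have h1 : gm S hS = (g S).orderEmbOfFin (hgcard S hS) :=
      Finset.orderEmbOfFin_unique (hgcard S hS)
        (fun x => by rw [gval S hS]; exact Finset.mem_image_of_mem _ (Finset.mem_univ x))
        (hgmono S hS)
    exact (congrFun h1 q).symm
  have hmem : ∀ (i : Fin a) (S : Finset (Fin a)) (hS : S.card = b),
      f i ∈ g S ↔ i ∈ S := by
    intro i S hS
    rw [gval S hS]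
    constructor
    · intro hx
      obtain ⟨q, -, hq⟩ := Finset.mem_image.mp hx
      have hval : phi hb β (σf S hS) (q : ℕ) = b * ((i : ℕ) + 1) - 1 :=
        congrArg Fin.val (e.injective hq)
      obtain ⟨u, hu1, -⟩ := phi_eq_target hb hβ hβlt (by have := q.isLt; omega) hval
      have h2 : S.orderEmbOfFin hS u = i := Fin.ext hu1
      rw [← h2]
      exact Finset.orderEmbOfFin_mem S hS u
    · intro hiS
      have h1 : i ∈ Set.range (S.orderEmbOfFin hS) := by
        rw [Finset.range_orderEmbOfFin]
        exact Finset.mem_coe.mpr hiS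
      obtain ⟨u, hu⟩ := h1
      refine Finset.mem_image.mpr ⟨B.orderEmbOfFin hB u, Finset.mem_univ _, ?_⟩
      apply congrArg (fun x => (e x : ℕ))
      apply Fin.ext
      show phi hb β (σf S hS) ((B.orderEmbOfFin hB u : Fin (2 * b - 1)) : ℕ)
        = b * ((i : ℕ) + 1) - 1
      rw [show ((B.orderEmbOfFin hB u : Fin (2 * b - 1)) : ℕ) = β u from rfl,
        phi_beta hb hβ (σf S hS) u,
        show σf S hS u = (i : ℕ) from congrArg Fin.val hu]
  have hcol : ∀ (i : Fin a) (S : Finset (Fin a)) (hS : S.card = b), i ∈ S →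
      COL (f i) (g S) = ε := by
    intro i S hS hiS
    have h1 : i ∈ Set.range (S.orderEmbOfFin hS) := by
      rw [Finset.range_orderEmbOfFin]
      exact Finset.mem_coe.mpr hiS
    obtain ⟨u, hu⟩ := h1
    have h2 := hpat (g S) (hgsub S hS) (hgcard S hS) (B.orderEmbOfFin hB u)
      (Finset.orderEmbOfFin_mem B hB u)
    rw [hemb S hS] at h2
    have h3 : gm S hS (B.orderEmbOfFin hB u) = f i := by
      apply congrArg (fun x => (e x : ℕ))
      apply Fin.ext
      show phi hb β (σf S hS) ((B.orderEmbOfFin hB u : Fin (2 * b - 1)) : ℕ)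
        = b * ((i : ℕ) + 1) - 1
      rw [show ((B.orderEmbOfFin hB u : Fin (2 * b - 1)) : ℕ) = β u from rfl,
        phi_beta hb hβ (σf S hS) u,
        show σf S hS u = (i : ℕ) from congrArg Fin.val hu]
    rw [h3] at h2
    exact h2
  have hfinj : Function.Injective f := by
    intro i j hij
    have h1 : b * ((i : ℕ) + 1) - 1 = b * ((j : ℕ) + 1) - 1 :=
      congrArg Fin.val (e.injective hij)
    have h3 : b * 1 ≤ b * ((i : ℕ) + 1) := Nat.mul_le_mul_left b (by omega)
    have h4 : b * 1 ≤ b * ((j : ℕ) + 1) := Nat.mul_le_mul_left b (by omega)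
    have h5 : b * ((i : ℕ) + 1) = b * ((j : ℕ) + 1) := by omega
    have h6 := Nat.eq_of_mul_eq_mul_left hb h5
    exact Fin.ext (by omega)
  refine ⟨f, g, ε, hfinj,
    fun i => hHsub (Finset.orderEmbOfFin_mem H hHcard _),
    fun S hS => ⟨Finset.Subset.trans (hgsub S hS) hHsub, hgcard S hS⟩,
    ?_, fun i S hS => hmem i S hS, fun i S hS hiS => hcol i S hS hiS⟩
  intro S T hS hT hST
  apply Finset.ext
  intro i
  rw [← hmem i S hS, ← hmem i T hT, hST]
end

section
/- Let H = {1, 2, ..., ab + b − 1} and let I = {i₁ < ... < i_b} ⊆ [2b−1] be a set of b indices. Suppose COL is a 2-coloring of the edges of B_{n, 2b−1} (with n ≥ ab + b − 1) such that for every (2b−1)-subset X = {z₁ < ... < z_{2b−1}} of H, the edges (z_{i}, X) for i ∈ I are all red. Then the left vertices L = {b, 2b, 3b, ..., ab}, together with suitably chosen right vertices (one (2b−1)-subset of H for each b-subset of L, containing exactly that b-subset among the elements of L and having its elements of L occupy the index positions I), induce a red monochromatic copy of B_{a,b} in B_{n,2b−1}. -/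
namespace Stmt8Aux

variable {b : ℕ} (I : Finset (Fin (2 * b - 1)))

/-- number of elements of `I` strictly below `p`. -/
def bkCnt (p : Fin (2 * b - 1)) : ℕ := (I.filter (· < p)).card

lemma bkCnt_le (hI : I.card = b) (p : Fin (2 * b - 1)) : bkCnt I p ≤ b := by
  have := Finset.card_filter_le I (· < p); rw [hI] at this; exact this

lemma bkCnt_mono {p q : Fin (2 * b - 1)} (h : p ≤ q) : bkCnt I p ≤ bkCnt I q := by
  refine Finset.card_le_card fun x hx => ?_
  rw [Finset.mem_filter] at hx ⊢
  exact ⟨hx.1, lt_of_lt_of_le hx.2 h⟩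

lemma le_ord (hI : I.card = b) {p : Fin (2 * b - 1)} (hk : bkCnt I p < b) :
    p ≤ I.orderEmbOfFin hI ⟨bkCnt I p, hk⟩ := by
  by_contra h
  push_neg at h
  have hsub : (Finset.Iic (⟨bkCnt I p, hk⟩ : Fin b)).image (I.orderEmbOfFin hI)
      ⊆ I.filter (· < p) := by
    intro x hx
    simp only [Finset.mem_image, Finset.mem_Iic] at hx
    obtain ⟨j, hj, rfl⟩ := hx
    exact Finset.mem_filter.2 ⟨Finset.orderEmbOfFin_mem _ _ _,
      lt_of_le_of_lt ((I.orderEmbOfFin hI).monotone hj) h⟩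
  have hcard := Finset.card_le_card hsub
  rw [Finset.card_image_of_injective _ (I.orderEmbOfFin hI).injective, Fin.card_Iic] at hcard
  have h2 : bkCnt I p + 1 ≤ bkCnt I p := hcard
  omega

lemma filter_eq (hI : I.card = b) {p : Fin (2 * b - 1)} (hk : bkCnt I p < b) :
    I.filter (· < p) = (Finset.Iio (⟨bkCnt I p, hk⟩ : Fin b)).image (I.orderEmbOfFin hI) := by
  apply Finset.eq_of_subset_of_card_le
  · intro x hx
    obtain ⟨hxI, hxp⟩ := Finset.mem_filter.1 hx
    refine Finset.mem_image.2 ⟨(I.orderIsoOfFin hI).symm ⟨x, hxI⟩, ?_, ?_⟩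
    · rw [Finset.mem_Iio]
      have hx2 : I.orderEmbOfFin hI ((I.orderIsoOfFin hI).symm ⟨x, hxI⟩) = x := by
        rw [← Finset.coe_orderIsoOfFin_apply]
        exact congrArg Subtype.val ((I.orderIsoOfFin hI).apply_symm_apply ⟨x, hxI⟩)
      have : I.orderEmbOfFin hI ((I.orderIsoOfFin hI).symm ⟨x, hxI⟩)
          < I.orderEmbOfFin hI ⟨bkCnt I p, hk⟩ := by
        rw [hx2]; exact lt_of_lt_of_le hxp (le_ord I hI hk)
      exact (I.orderEmbOfFin hI).lt_iff_lt.1 this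
    · rw [← Finset.coe_orderIsoOfFin_apply]
      exact congrArg Subtype.val ((I.orderIsoOfFin hI).apply_symm_apply ⟨x, hxI⟩)
  · rw [Finset.card_image_of_injective _ (I.orderEmbOfFin hI).injective, Fin.card_Iio]
    exact le_refl _

lemma bkCnt_mem (hI : I.card = b) {p : Fin (2 * b - 1)} (hp : p ∈ I) :
    bkCnt I p = ((I.orderIsoOfFin hI).symm ⟨p, hp⟩ : Fin b) := by
  set j := (I.orderIsoOfFin hI).symm ⟨p, hp⟩ with hj
  have hordj : I.orderEmbOfFin hI j = p := by
    rw [← Finset.coe_orderIsoOfFin_apply, hj]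
    exact congrArg Subtype.val ((I.orderIsoOfFin hI).apply_symm_apply ⟨p, hp⟩)
  have heq : I.filter (· < p) = (Finset.Iio j).image (I.orderEmbOfFin hI) := by
    ext x
    simp only [Finset.mem_filter, Finset.mem_image, Finset.mem_Iio]
    constructor
    · rintro ⟨hxI, hxp⟩
      refine ⟨(I.orderIsoOfFin hI).symm ⟨x, hxI⟩, ?_, ?_⟩
      · have hx2 : I.orderEmbOfFin hI ((I.orderIsoOfFin hI).symm ⟨x, hxI⟩) = x := by
          rw [← Finset.coe_orderIsoOfFin_apply]
          exact congrArg Subtype.val ((I.orderIsoOfFin hI).apply_symm_apply ⟨x, hxI⟩)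
        refine (I.orderEmbOfFin hI).lt_iff_lt.1 ?_
        rw [hx2, hordj]; exact hxp
      · rw [← Finset.coe_orderIsoOfFin_apply]
        exact congrArg Subtype.val ((I.orderIsoOfFin hI).apply_symm_apply ⟨x, hxI⟩)
    · rintro ⟨j', hj', rfl⟩
      refine ⟨Finset.orderEmbOfFin_mem _ _ _, ?_⟩
      rw [← hordj]
      exact (I.orderEmbOfFin hI).lt_iff_lt.2 hj'
  rw [bkCnt, heq, Finset.card_image_of_injective _ (I.orderEmbOfFin hI).injective, Fin.card_Iio]

lemma ord_bkCnt_mem (hI : I.card = b) {p : Fin (2 * b - 1)} (hp : p ∈ I) :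
    ∃ hk : bkCnt I p < b, I.orderEmbOfFin hI ⟨bkCnt I p, hk⟩ = p := by
  have h1 := bkCnt_mem I hI hp
  have hk : bkCnt I p < b := by rw [h1]; exact Fin.isLt _
  refine ⟨hk, ?_⟩
  have : (⟨bkCnt I p, hk⟩ : Fin b) = (I.orderIsoOfFin hI).symm ⟨p, hp⟩ := Fin.ext h1
  rw [this, ← Finset.coe_orderIsoOfFin_apply]
  exact congrArg Subtype.val ((I.orderIsoOfFin hI).apply_symm_apply ⟨p, hp⟩)

lemma bkCnt_ord (hI : I.card = b) (j : Fin b) : bkCnt I (I.orderEmbOfFin hI j) = j := by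
  have hp : I.orderEmbOfFin hI j ∈ I := Finset.orderEmbOfFin_mem _ _ _
  rw [bkCnt_mem I hI hp]
  congr 1
  apply (I.orderIsoOfFin hI).injective
  rw [OrderIso.apply_symm_apply]
  exact Subtype.ext (Finset.coe_orderIsoOfFin_apply _ _ _).symm


/-- for `k p < b`, distance to next index-element is at most `b-1`, and the gap contains no
elements of `I`. -/
lemma diff_le (hb : 0 < b) (hI : I.card = b) {p : Fin (2 * b - 1)} (hk : bkCnt I p < b) :
    ((I.orderEmbOfFin hI ⟨bkCnt I p, hk⟩ : Fin (2 * b - 1)) : ℕ) - (p : ℕ) ≤ b - 1 := by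
  set q := I.orderEmbOfFin hI ⟨bkCnt I p, hk⟩ with hq
  have hdisj : Disjoint (Finset.Ico p q) I := by
    rw [Finset.disjoint_left]
    intro x hx hxI
    rw [Finset.mem_Ico] at hx
    have hxlt : x ∈ (Finset.Iio (⟨bkCnt I p, hk⟩ : Fin b)).image (I.orderEmbOfFin hI) := by
      obtain ⟨hk', hx'⟩ := ord_bkCnt_mem I hI hxI
      refine Finset.mem_image.2 ⟨⟨bkCnt I x, hk'⟩, ?_, hx'⟩
      rw [Finset.mem_Iio]
      refine (I.orderEmbOfFin hI).lt_iff_lt.1 ?_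
      rw [hx', ← hq]; exact hx.2
    rw [← filter_eq I hI hk] at hxlt
    exact absurd (Finset.mem_filter.1 hxlt).2 (not_lt.2 hx.1)
  have hcard : (Finset.Ico p q).card + I.card ≤ 2 * b - 1 := by
    rw [← Finset.card_union_of_disjoint hdisj]
    have := Finset.card_le_univ (Finset.Ico p q ∪ I)
    simpa using this
  rw [Fin.card_Ico, hI] at hcard
  omega

lemma top_facts (hb : 0 < b) (hI : I.card = b) {p : Fin (2 * b - 1)}
    (hk : bkCnt I p = b) :
    ((I.orderEmbOfFin hI ⟨b - 1, by omega⟩ : Fin (2 * b - 1)) : ℕ) < (p : ℕ) ∧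
    (p : ℕ) - ((I.orderEmbOfFin hI ⟨b - 1, by omega⟩ : Fin (2 * b - 1)) : ℕ) ≤ b - 1 ∧
    p ∉ I := by
  set e := I.orderEmbOfFin hI ⟨b - 1, by omega⟩ with he
  have hfeq : I.filter (· < p) = I := by
    apply Finset.eq_of_subset_of_card_le (Finset.filter_subset _ _)
    rw [hI]; rw [bkCnt] at hk; omega
  have hall : ∀ x ∈ I, x < p := by
    intro x hx; rw [← hfeq] at hx; exact (Finset.mem_filter.1 hx).2
  have hep : e < p := hall e (Finset.orderEmbOfFin_mem _ _ _)
  have hpI : p ∉ I := fun hp => lt_irrefl p (hall p hp)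
  have hle : ∀ x ∈ I, x ≤ e := by
    intro x hx
    obtain ⟨hk', hx'⟩ := ord_bkCnt_mem I hI hx
    rw [← hx', he]
    exact (I.orderEmbOfFin hI).monotone (by simp [Fin.le_def]; omega)
  have hdisj : Disjoint (Finset.Ioc e p) I := by
    rw [Finset.disjoint_left]
    intro x hx hxI
    rw [Finset.mem_Ioc] at hx
    exact absurd (hle x hxI) (not_le.2 hx.1)
  have hcard : (Finset.Ioc e p).card + I.card ≤ 2 * b - 1 := by
    rw [← Finset.card_union_of_disjoint hdisj]
    have := Finset.card_le_univ (Finset.Ioc e p ∪ I)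
    simpa using this
  rw [Fin.card_Ioc, hI] at hcard
  exact ⟨hep, by omega, hpI⟩

variable (S : Finset ℕ)

/-- The strictly monotone enumeration of the chosen `(2b-1)`-set for `S`. -/
def bF (hb : 0 < b) (hI : I.card = b) (hS : S.card = b) (p : Fin (2 * b - 1)) : ℕ :=
  if hk : bkCnt I p < b then
    S.orderEmbOfFin hS ⟨bkCnt I p, hk⟩ -
      (((I.orderEmbOfFin hI ⟨bkCnt I p, hk⟩ : Fin (2 * b - 1)) : ℕ) - (p : ℕ))
  else
    S.orderEmbOfFin hS ⟨b - 1, by omega⟩ +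
      ((p : ℕ) - ((I.orderEmbOfFin hI ⟨b - 1, by omega⟩ : Fin (2 * b - 1)) : ℕ))

lemma s_gap (hS : S.card = b) (hdvd : ∀ x ∈ S, b ∣ x) {j j' : Fin b} (h : j < j') :
    S.orderEmbOfFin hS j + b ≤ S.orderEmbOfFin hS j' := by
  obtain ⟨c, hc⟩ := hdvd _ (Finset.orderEmbOfFin_mem S hS j)
  obtain ⟨c', hc'⟩ := hdvd _ (Finset.orderEmbOfFin_mem S hS j')
  have hlt : S.orderEmbOfFin hS j < S.orderEmbOfFin hS j' :=
    (S.orderEmbOfFin hS).lt_iff_lt.2 h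
  rw [hc, hc'] at hlt ⊢
  have hb : 0 < b := by
    rcases Nat.eq_zero_or_pos b with h0 | h0
    · subst h0; simp at hlt
    · exact h0
  have : c < c' := lt_of_mul_lt_mul_left hlt (Nat.zero_le b)
  calc b * c + b = b * (c + 1) := by ring
    _ ≤ b * c' := Nat.mul_le_mul_left b this

lemma bF_strictMono (hb : 0 < b) (hI : I.card = b) (hS : S.card = b)
    (hdvd : ∀ x ∈ S, b ∣ x) (hlb : ∀ x ∈ S, b ≤ x) :
    StrictMono (bF I S hb hI hS) := by
  intro p p' hpp'
  have hkmono : bkCnt I p ≤ bkCnt I p' := bkCnt_mono I (le_of_lt hpp')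
  have hkle := bkCnt_le I hI p
  have hkle' := bkCnt_le I hI p'
  unfold bF
  split_ifs with h1 h2 h2
  · -- both < b
    rcases Nat.lt_or_ge (bkCnt I p) (bkCnt I p') with hlt | hge
    · have hgap := s_gap S hS hdvd (show (⟨bkCnt I p, h1⟩ : Fin b) < ⟨bkCnt I p', h2⟩ from hlt)
      have hs1 := hlb _ (Finset.orderEmbOfFin_mem S hS ⟨bkCnt I p, h1⟩)
      have hd1 := diff_le I hb hI h1
      have hd2 := diff_le I hb hI h2
      have hp2 : (p' : ℕ) ≤ ((I.orderEmbOfFin hI ⟨bkCnt I p', h2⟩ : Fin (2 * b - 1)) : ℕ) :=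
        le_ord I hI h2
      omega
    · have hkeq : bkCnt I p = bkCnt I p' := le_antisymm hkmono hge
      have hfin : (⟨bkCnt I p, h1⟩ : Fin b) = ⟨bkCnt I p', h2⟩ := Fin.ext hkeq
      rw [hfin]
      have hp2 : (p' : ℕ) ≤ ((I.orderEmbOfFin hI ⟨bkCnt I p', h2⟩ : Fin (2 * b - 1)) : ℕ) :=
        le_ord I hI h2
      have hs1 := hlb _ (Finset.orderEmbOfFin_mem S hS ⟨bkCnt I p', h2⟩)
      have hd2 := diff_le I hb hI h2
      have hpp : (p : ℕ) < (p' : ℕ) := hpp'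
      omega
  · -- kp < b, kp' = b
    have hk' : bkCnt I p' = b := by omega
    obtain ⟨hep, _, _⟩ := top_facts I hb hI hk'
    have hmono : S.orderEmbOfFin hS ⟨bkCnt I p, h1⟩ ≤ S.orderEmbOfFin hS ⟨b - 1, by omega⟩ :=
      (S.orderEmbOfFin hS).monotone (by simp [Fin.le_def]; omega)
    omega
  · omega
  · -- both = b
    have hk1 : bkCnt I p = b := by omega
    obtain ⟨hep, _, _⟩ := top_facts I hb hI hk1
    have hpp : (p : ℕ) < (p' : ℕ) := hpp'
    omega

lemma bF_ord (hb : 0 < b) (hI : I.card = b) (hS : S.card = b) (j : Fin b) :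
    bF I S hb hI hS (I.orderEmbOfFin hI j) = S.orderEmbOfFin hS j := by
  have h1 := bkCnt_ord I hI j
  have hk : bkCnt I (I.orderEmbOfFin hI j) < b := by rw [h1]; exact j.isLt
  rw [bF, dif_pos hk]
  have hfin : (⟨bkCnt I (I.orderEmbOfFin hI j), hk⟩ : Fin b) = j := Fin.ext h1
  rw [hfin]
  omega

lemma bF_mem_of_mem_I (hb : 0 < b) (hI : I.card = b) (hS : S.card = b)
    {p : Fin (2 * b - 1)} (hp : p ∈ I) : bF I S hb hI hS p ∈ S := by
  obtain ⟨hk, hx⟩ := ord_bkCnt_mem I hI hp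
  have := bF_ord I S hb hI hS ⟨bkCnt I p, hk⟩
  rw [hx] at this
  rw [this]
  exact Finset.orderEmbOfFin_mem _ _ _

lemma bF_not_dvd (hb : 0 < b) (hI : I.card = b) (hS : S.card = b)
    (hdvd : ∀ x ∈ S, b ∣ x) (hlb : ∀ x ∈ S, b ≤ x)
    {p : Fin (2 * b - 1)} (hp : p ∉ I) : ¬ b ∣ bF I S hb hI hS p := by
  intro hdvd'
  rw [bF] at hdvd'
  split_ifs at hdvd' with hk
  · set sv := S.orderEmbOfFin hS ⟨bkCnt I p, hk⟩ with hsv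
    set e := ((I.orderEmbOfFin hI ⟨bkCnt I p, hk⟩ : Fin (2 * b - 1)) : ℕ) with he
    have hple : (p : ℕ) ≤ e := le_ord I hI hk
    have hne : (p : ℕ) ≠ e := by
      intro h
      apply hp
      have : p = I.orderEmbOfFin hI ⟨bkCnt I p, hk⟩ := Fin.ext h
      rw [this]; exact Finset.orderEmbOfFin_mem _ _ _
    have hd := diff_le I hb hI hk
    have hsb := hlb _ (Finset.orderEmbOfFin_mem S hS ⟨bkCnt I p, hk⟩)
    have hsd := hdvd _ (Finset.orderEmbOfFin_mem S hS ⟨bkCnt I p, hk⟩)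
    -- b ∣ sv and b ∣ sv - (e - p) with 1 ≤ e - p ≤ b-1 < b ≤ sv : contradiction
    have h2 : b ∣ sv - (sv - (e - (p : ℕ))) := Nat.dvd_sub hsd hdvd'
    rw [Nat.sub_sub_self (by omega)] at h2
    have := Nat.le_of_dvd (by omega) h2
    omega
  · have hk1 : bkCnt I p = b := by have := bkCnt_le I hI p; omega
    obtain ⟨hep, hd, _⟩ := top_facts I hb hI hk1
    set sv := S.orderEmbOfFin hS ⟨b - 1, by omega⟩ with hsv
    have hsd := hdvd _ (Finset.orderEmbOfFin_mem S hS ⟨b - 1, by omega⟩)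
    have h2 : b ∣ sv + ((p : ℕ) - _) - sv := Nat.dvd_sub hdvd' hsd
    rw [Nat.add_sub_cancel_left] at h2
    have := Nat.le_of_dvd (by omega) h2
    omega

lemma bF_bounds (a : ℕ) (hb : 0 < b) (hI : I.card = b) (hS : S.card = b)
    (hlb : ∀ x ∈ S, b ≤ x) (hub : ∀ x ∈ S, x ≤ a * b)
    (p : Fin (2 * b - 1)) : 1 ≤ bF I S hb hI hS p ∧ bF I S hb hI hS p ≤ a * b + b - 1 := by
  rw [bF]
  split_ifs with hk
  · have hd := diff_le I hb hI hk
    have hsb := hlb _ (Finset.orderEmbOfFin_mem S hS ⟨bkCnt I p, hk⟩)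
    have hsu := hub _ (Finset.orderEmbOfFin_mem S hS ⟨bkCnt I p, hk⟩)
    omega
  · have hk1 : bkCnt I p = b := by have := bkCnt_le I hI p; omega
    obtain ⟨hep, hd, _⟩ := top_facts I hb hI hk1
    have hsb := hlb _ (Finset.orderEmbOfFin_mem S hS ⟨b - 1, by omega⟩)
    have hsu := hub _ (Finset.orderEmbOfFin_mem S hS ⟨b - 1, by omega⟩)
    omega

end Stmt8Aux



/-- If every `(2b-1)`-subset `X` of `H = [ab+b-1]` has its edges at the index
positions `I` colored red, then the left vertices `L = {b, 2b, …, ab}` together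
with suitably chosen right vertices induce a red monochromatic copy of
`B_{a,b}` in `B_{n,2b-1}`. -/
theorem stmt_8 (a b n : ℕ) (hb : 0 < b) (hba : b ≤ a) (hn : a * b + b - 1 ≤ n)
    (I : Finset (Fin (2 * b - 1))) (hI : I.card = b)
    (COL : ℕ → Finset ℕ → Fin 2)
    (hred : ∀ (X : Finset ℕ) (hX : X.card = 2 * b - 1),
      X ⊆ Finset.Icc 1 (a * b + b - 1) →
      ∀ i ∈ I, COL ((X.orderIsoOfFin hX i : ℕ)) X = 0) :
    ((Finset.Icc 1 a).image (· * b)).card = a ∧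
    ∃ g : Finset ℕ → Finset ℕ,
      (∀ S ⊆ (Finset.Icc 1 a).image (· * b), S.card = b →
        ∃ h : (g S).card = 2 * b - 1,
          g S ⊆ Finset.Icc 1 (a * b + b - 1) ∧
          g S ∩ (Finset.Icc 1 a).image (· * b) = S ∧
          (∀ i : Fin (2 * b - 1), ((g S).orderIsoOfFin h i : ℕ) ∈ S ↔ i ∈ I) ∧
          (∀ x ∈ S, COL x (g S) = 0)) ∧
      (∀ S T, S ⊆ (Finset.Icc 1 a).image (· * b) →
        T ⊆ (Finset.Icc 1 a).image (· * b) →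
        S.card = b → T.card = b → g S = g T → S = T) := by
  classical
  set L := (Finset.Icc 1 a).image (· * b) with hL
  have hinj : Function.Injective (· * b) := fun x y h => Nat.eq_of_mul_eq_mul_right hb h
  have hLcard : L.card = a := by
    rw [hL, Finset.card_image_of_injective _ hinj, Nat.card_Icc]; omega
  -- facts about members of L
  have hLfacts : ∀ x ∈ L, b ∣ x ∧ b ≤ x ∧ x ≤ a * b := by
    intro x hx
    rw [hL, Finset.mem_image] at hx
    obtain ⟨c, hc, rfl⟩ := hx
    rw [Finset.mem_Icc] at hc
    exact ⟨Dvd.intro_left c rfl, by nlinarith, Nat.mul_le_mul_right b hc.2⟩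
  refine ⟨hLcard, fun S =>
    if h : S.card = b ∧ S ⊆ L then
      Finset.image (Stmt8Aux.bF I S hb hI h.1) Finset.univ else ∅, ?_, ?_⟩
  · intro S hSL hScard
    beta_reduce
    rw [dif_pos ⟨hScard, hSL⟩]
    have hdvd : ∀ x ∈ S, b ∣ x := fun x hx => (hLfacts x (hSL hx)).1
    have hlb : ∀ x ∈ S, b ≤ x := fun x hx => (hLfacts x (hSL hx)).2.1
    have hub : ∀ x ∈ S, x ≤ a * b := fun x hx => (hLfacts x (hSL hx)).2.2
    set f := Stmt8Aux.bF I S hb hI hScard with hf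
    have hmono : StrictMono f := Stmt8Aux.bF_strictMono I S hb hI hScard hdvd hlb
    have hcard : (Finset.image f Finset.univ).card = 2 * b - 1 := by
      rw [Finset.card_image_of_injective _ hmono.injective, Finset.card_univ,
        Fintype.card_fin]
    refine ⟨hcard, ?_, ?_, ?_, ?_⟩
    · -- subset of Icc
      intro x hx
      obtain ⟨p, _, rfl⟩ := Finset.mem_image.1 hx
      have := Stmt8Aux.bF_bounds I S a hb hI hScard hlb hub p
      rw [Finset.mem_Icc]
      exact ⟨this.1, this.2⟩
    · -- intersection with L is S
      ext x
      rw [Finset.mem_inter]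
      constructor
      · rintro ⟨hx1, hx2⟩
        obtain ⟨p, _, rfl⟩ := Finset.mem_image.1 hx1
        by_cases hp : p ∈ I
        · exact Stmt8Aux.bF_mem_of_mem_I I S hb hI hScard hp
        · exact absurd (hLfacts _ hx2).1
            (Stmt8Aux.bF_not_dvd I S hb hI hScard hdvd hlb hp)
      · intro hx
        refine ⟨?_, hSL hx⟩
        set j := (S.orderIsoOfFin hScard).symm ⟨x, hx⟩ with hj
        have hsx : S.orderEmbOfFin hScard j = x := by
          rw [← Finset.coe_orderIsoOfFin_apply, hj]
          exact congrArg Subtype.val ((S.orderIsoOfFin hScard).apply_symm_apply ⟨x, hx⟩)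
        rw [← hsx, ← Stmt8Aux.bF_ord I S hb hI hScard j]
        exact Finset.mem_image_of_mem f (Finset.mem_univ _)
    · -- order iso positions
      have hcoe : ∀ i : Fin (2 * b - 1),
          (((Finset.image f Finset.univ).orderIsoOfFin hcard i : ℕ)) = f i := by
        have hemb := Finset.orderEmbOfFin_unique hcard
          (f := f) (fun p => Finset.mem_image_of_mem f (Finset.mem_univ p)) hmono
        intro i
        rw [Finset.coe_orderIsoOfFin_apply, ← hemb]
      intro i
      rw [hcoe i]
      constructor
      · intro hfi
        by_contra hi
        exact Stmt8Aux.bF_not_dvd I S hb hI hScard hdvd hlb hi (hdvd _ hfi)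
      · exact fun hi => Stmt8Aux.bF_mem_of_mem_I I S hb hI hScard hi
    · -- red edges
      intro x hx
      set j := (S.orderIsoOfFin hScard).symm ⟨x, hx⟩ with hj
      have hsx : S.orderEmbOfFin hScard j = x := by
        rw [← Finset.coe_orderIsoOfFin_apply, hj]
        exact congrArg Subtype.val ((S.orderIsoOfFin hScard).apply_symm_apply ⟨x, hx⟩)
      have hsub : Finset.image f Finset.univ ⊆ Finset.Icc 1 (a * b + b - 1) := by
        intro y hy
        obtain ⟨p, _, rfl⟩ := Finset.mem_image.1 hy
        have := Stmt8Aux.bF_bounds I S a hb hI hScard hlb hub p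
        rw [Finset.mem_Icc]
        exact ⟨this.1, this.2⟩
      have hred' := hred (Finset.image f Finset.univ) hcard hsub
        (I.orderEmbOfFin hI j) (Finset.orderEmbOfFin_mem _ _ _)
      have hcoe : (((Finset.image f Finset.univ).orderIsoOfFin hcard
          (I.orderEmbOfFin hI j) : ℕ)) = x := by
        have hemb := Finset.orderEmbOfFin_unique hcard
          (f := f) (fun p => Finset.mem_image_of_mem f (Finset.mem_univ p)) hmono
        rw [Finset.coe_orderIsoOfFin_apply, ← hemb]
        rw [hf, Stmt8Aux.bF_ord I S hb hI hScard j, hsx]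
      rw [← hcoe]
      exact hred'
  · -- injectivity
    intro S T hSL hTL hScard hTcard heq
    beta_reduce at heq
    rw [dif_pos ⟨hScard, hSL⟩, dif_pos ⟨hTcard, hTL⟩] at heq
    have key : ∀ (U : Finset ℕ) (hU : U.card = b), U ⊆ L →
        Finset.image (Stmt8Aux.bF I U hb hI hU) Finset.univ ∩ L = U := by
      intro U hU hUL
      have hdvd : ∀ x ∈ U, b ∣ x := fun x hx => (hLfacts x (hUL hx)).1
      have hlb : ∀ x ∈ U, b ≤ x := fun x hx => (hLfacts x (hUL hx)).2.1
      ext x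
      rw [Finset.mem_inter]
      constructor
      · rintro ⟨hx1, hx2⟩
        obtain ⟨p, _, rfl⟩ := Finset.mem_image.1 hx1
        by_cases hp : p ∈ I
        · exact Stmt8Aux.bF_mem_of_mem_I I U hb hI hU hp
        · exact absurd (hLfacts _ hx2).1
            (Stmt8Aux.bF_not_dvd I U hb hI hU hdvd hlb hp)
      · intro hx
        refine ⟨?_, hUL hx⟩
        set j := (U.orderIsoOfFin hU).symm ⟨x, hx⟩ with hj
        have hsx : U.orderEmbOfFin hU j = x := by
          rw [← Finset.coe_orderIsoOfFin_apply, hj]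
          exact congrArg Subtype.val ((U.orderIsoOfFin hU).apply_symm_apply ⟨x, hx⟩)
        rw [← hsx, ← Stmt8Aux.bF_ord I U hb hI hU j]
        exact Finset.mem_image_of_mem _ (Finset.mem_univ _)
    rw [← key S hScard hSL, ← key T hTcard hTL, heq]
end

section
/- Every bipartite graph G with c left vertices and d right vertices is an induced subgraph of B_{a,b} where a = 2c + d and b = c + 1. That is, there exist an injection f from the left vertices of G into [a] and an injection g from the right vertices of G into the b-subsets of [a], such that for every left vertex u and right vertex v of G: u is adjacent to v in G if and only if f(u) ∈ g(v). -/
/-- Every bipartite graph with `c` left vertices and `d` right vertices is an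
induced subgraph of `B_{2c+d, c+1}`. -/
theorem stmt_9 (c d : ℕ) (Adj : Fin c → Fin d → Prop) :
    ∃ (f : Fin c → Fin (2 * c + d)) (g : Fin d → Finset (Fin (2 * c + d))),
      Function.Injective f ∧ Function.Injective g ∧
      (∀ v, (g v).card = c + 1) ∧
      (∀ u v, Adj u v ↔ f u ∈ g v) := by
  classical
  -- work in the sum type first
  set T := (Fin c ⊕ (Fin c ⊕ Fin d)) with hT
  let ε : T ≃ Fin (2 * c + d) :=
    ((Equiv.sumCongr (Equiv.refl (Fin c)) finSumFinEquiv).trans finSumFinEquiv).trans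
      (finCongr (by omega))
  let A : Fin d → Finset (Fin c) := fun v => Finset.univ.filter (fun u => Adj u v)
  have hAc : ∀ v, (A v).card ≤ c := fun v =>
    le_trans (Finset.card_filter_le _ _) (by simp)
  let pad : Fin d → Finset (Fin c) := fun v =>
    (Finset.range (c - (A v).card)).attachFin (fun m hm => by
      have := Finset.mem_range.mp hm; omega)
  have hpad : ∀ v, (pad v).card = c - (A v).card := fun v => by
    simp [pad, Finset.card_attachFin]
  let g' : Fin d → Finset T := fun v =>
    (A v).image Sum.inl ∪ (pad v).image (fun x => Sum.inr (Sum.inl x)) ∪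
      {Sum.inr (Sum.inr v)}
  have hmemInl : ∀ u v, (Sum.inl u : T) ∈ g' v ↔ Adj u v := by
    intro u v
    simp [g', A]
  have hmemTag : ∀ v w, (Sum.inr (Sum.inr w) : T) ∈ g' v ↔ w = v := by
    intro v w
    simp [g']
  have hcard : ∀ v, (g' v).card = c + 1 := by
    intro v
    have h1 : ((A v).image (Sum.inl : Fin c → T)).card = (A v).card :=
      Finset.card_image_of_injective _ Sum.inl_injective
    have h2 : ((pad v).image (fun x : Fin c => (Sum.inr (Sum.inl x) : T))).card
        = c - (A v).card := by
      rw [Finset.card_image_of_injective, hpad]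
      intro a b hab; simpa using hab
    have d12 : Disjoint ((A v).image (Sum.inl : Fin c → T))
        ((pad v).image (fun x : Fin c => (Sum.inr (Sum.inl x) : T))) := by
      simp [Finset.disjoint_left]
    have d3 : Disjoint ((A v).image (Sum.inl : Fin c → T) ∪
        (pad v).image (fun x : Fin c => (Sum.inr (Sum.inl x) : T)))
        ({Sum.inr (Sum.inr v)} : Finset T) := by
      simp [Finset.disjoint_right]
    have := hAc v
    show (Finset.image Sum.inl (A v) ∪ Finset.image (fun x => Sum.inr (Sum.inl x)) (pad v) ∪ {Sum.inr (Sum.inr v)}).card = c + 1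
    rw [Finset.card_union_of_disjoint d3, Finset.card_union_of_disjoint d12, h1, h2]
    simp; omega
  refine ⟨fun u => ε (Sum.inl u), fun v => (g' v).image ε, ?_, ?_, ?_, ?_⟩
  · exact fun a b hab => Sum.inl_injective (ε.injective hab)
  · intro v w h
    have h' : g' v = g' w := Finset.image_injective ε.injective h
    have : (Sum.inr (Sum.inr v) : T) ∈ g' w := by
      rw [← h']; exact (hmemTag v v).mpr rfl
    exact (hmemTag w v).mp this
  · intro v
    rw [Finset.card_image_of_injective _ ε.injective, hcard]
  · intro u v
    rw [← hmemInl u v]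
    constructor
    · intro h; exact Finset.mem_image_of_mem _ h
    · intro h
      obtain ⟨x, hx, hxe⟩ := Finset.mem_image.mp h
      rwa [← ε.injective hxe]
end

section
/- For every bipartite graph G, there exist positive integers n and k such that for every 2-coloring of the edges of B_{n,k}, there is an induced monochromatic copy of G: injections of the left vertices of G into [n] and of the right vertices of G into the k-subsets of [n] preserving both adjacency and non-adjacency, such that all edges of the image receive the same color. -/
open Finset

theorem hyperRamsey (k : ℕ) (κ : Type) [Fintype κ] [Nonempty κ] :
    ∀ h : ℕ, ∃ n : ℕ, ∀ (γ : Finset ℕ → κ) (V : Finset ℕ), n ≤ V.card →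
      ∃ H : Finset ℕ, H ⊆ V ∧ h ≤ H.card ∧
        ∃ C : κ, ∀ T ⊆ H, T.card = k → γ T = C := by
  induction k with
  | zero =>
    intro h
    refine ⟨h, fun γ V hV => ⟨V, subset_rfl, hV, γ ∅, ?_⟩⟩
    intro T _ hcard
    rw [Finset.card_eq_zero.mp hcard]
  | succ k IH =>
    have chain : ∀ L : ℕ, ∃ n : ℕ, ∀ (γ : Finset ℕ → κ) (V : Finset ℕ), n ≤ V.card →
        ∃ (a : Fin L → ℕ) (cf : Fin L → κ), (∀ i, a i ∈ V) ∧
          (∀ i j : Fin L, i < j → a i ≠ a j) ∧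
          (∀ (i : Fin L) (T : Finset ℕ),
            (∀ x ∈ T, ∃ jj : Fin L, i < jj ∧ x = a jj) → T.card = k →
              γ (insert (a i) T) = cf i) := by
      intro L
      induction L with
      | zero =>
        exact ⟨0, fun γ V _ => ⟨fun i => i.elim0, fun i => i.elim0,
          fun i => i.elim0, fun i => i.elim0, fun i => i.elim0⟩⟩
      | succ L ihL =>
        obtain ⟨nL, hL⟩ := ihL
        obtain ⟨nR, hR⟩ := IH nL
        refine ⟨nR + 1, ?_⟩
        intro γ V hV
        have hne : V.Nonempty := Finset.card_pos.mp (by omega)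
        obtain ⟨x₀, hx₀⟩ := hne
        have hcard' : nR ≤ (V.erase x₀).card := by
          rw [Finset.card_erase_of_mem hx₀]; omega
        obtain ⟨H₁, hH₁sub, hH₁card, C₀, hC₀⟩ :=
          hR (fun T => γ (insert x₀ T)) (V.erase x₀) hcard'
        obtain ⟨a, cf, ha1, ha2, ha3⟩ := hL γ H₁ hH₁card
        refine ⟨Fin.cases x₀ a, Fin.cases C₀ cf, ?_, ?_, ?_⟩
        · intro i
          induction i using Fin.cases with
          | zero => simpa using hx₀
          | succ i => simpa using (Finset.erase_subset _ _) (hH₁sub (ha1 i))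
        · intro i j hij
          induction i using Fin.cases with
          | zero =>
            induction j using Fin.cases with
            | zero => exact absurd hij (lt_irrefl _)
            | succ j =>
              simp only [Fin.cases_zero, Fin.cases_succ]
              intro heq
              exact Finset.ne_of_mem_erase (hH₁sub (ha1 j)) heq.symm
          | succ i =>
            induction j using Fin.cases with
            | zero => exact absurd hij (Fin.not_lt_zero _)
            | succ j =>
              simp only [Fin.cases_succ]
              exact ha2 i j (by simpa [Fin.succ_lt_succ_iff] using hij)
        · intro i T hT hTcard
          induction i using Fin.cases with
          | zero =>
            have hsub : T ⊆ H₁ := by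
              intro x hx
              obtain ⟨jj, hjj, rfl⟩ := hT x hx
              have : jj ≠ 0 := by
                intro h0; rw [h0] at hjj; exact absurd hjj (lt_irrefl _)
              obtain ⟨j', rfl⟩ := Fin.exists_succ_eq.mpr this
              simpa using ha1 j'
            simpa using hC₀ T hsub hTcard
          | succ i =>
            simp only [Fin.cases_succ]
            refine ha3 i T ?_ hTcard
            intro x hx
            obtain ⟨jj, hjj, rfl⟩ := hT x hx
            have : jj ≠ 0 := by
              intro h0; rw [h0] at hjj; exact absurd hjj (Fin.not_lt_zero _)
            obtain ⟨j', rfl⟩ := Fin.exists_succ_eq.mpr this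
            exact ⟨j', by simpa [Fin.succ_lt_succ_iff] using hjj, by simp⟩
    intro h
    classical
    obtain ⟨n, hch⟩ := chain (Fintype.card κ * h)
    refine ⟨n, ?_⟩
    intro γ V hV
    obtain ⟨a, cf, ha1, ha2, ha3⟩ := hch γ V hV
    have ainj : ∀ i j, a i = a j → i = j := by
      intro i j hij
      rcases lt_trichotomy i j with h' | h' | h'
      · exact absurd hij (ha2 i j h')
      · exact h'
      · exact absurd hij.symm (ha2 j i h')
    obtain ⟨C, hC⟩ := Fintype.exists_le_card_fiber_of_mul_le_card cf
      (by rw [Fintype.card_fin])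
    set D : Finset (Fin (Fintype.card κ * h)) := univ.filter (fun i => cf i = C) with hD
    refine ⟨D.image a, ?_, ?_, C, ?_⟩
    · intro x hx
      obtain ⟨i, _, rfl⟩ := Finset.mem_image.mp hx
      exact ha1 i
    · rw [Finset.card_image_of_injOn (fun i _ j _ => ainj i j)]
      exact hC
    · intro T hTsub hTcard
      set D' : Finset (Fin (Fintype.card κ * h)) := D.filter (fun i => a i ∈ T) with hD'
      have himg : D'.image a = T := by
        apply Finset.Subset.antisymm
        · intro x hx
          obtain ⟨i, hi, rfl⟩ := Finset.mem_image.mp hx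
          exact (Finset.mem_filter.mp hi).2
        · intro x hx
          obtain ⟨i, hi, rfl⟩ := Finset.mem_image.mp (hTsub hx)
          exact Finset.mem_image.mpr ⟨i, Finset.mem_filter.mpr ⟨hi, hx⟩, rfl⟩
      have hD'card : D'.card = k + 1 := by
        rw [← hTcard, ← himg, Finset.card_image_of_injOn (fun i _ j _ => ainj i j)]
      have hD'ne : D'.Nonempty := Finset.card_pos.mp (by omega)
      set m := D'.min' hD'ne with hm
      have hmD' : m ∈ D' := Finset.min'_mem _ _
      have hmT : a m ∈ T := (Finset.mem_filter.mp hmD').2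
      have hT' : (T.erase (a m)).card = k := by
        rw [Finset.card_erase_of_mem hmT, hTcard]; omega
      have hchain : ∀ x ∈ T.erase (a m), ∃ jj, m < jj ∧ x = a jj := by
        intro x hx
        have hxT : x ∈ T := Finset.mem_of_mem_erase hx
        rw [← himg] at hxT
        obtain ⟨i, hi, rfl⟩ := Finset.mem_image.mp hxT
        have : i ≠ m := by
          intro h'; subst h'
          exact absurd rfl (Finset.ne_of_mem_erase hx)
        exact ⟨i, lt_of_le_of_ne (Finset.min'_le _ _ hi) (Ne.symm this), rfl⟩
      have := ha3 m (T.erase (a m)) hchain hT'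
      rw [Finset.insert_erase hmT] at this
      rw [this]
      exact (Finset.mem_filter.mp ((Finset.mem_filter.mp hmD').1)).2


def vposN (c : ℕ) (i : Fin c) : ℕ := (i.val + 1) * (2*c+4)

def eposN (c : ℕ) (S : Finset (Fin c)) (ρ : Fin c → Fin (2*c+3)) (selv : ℕ)
    (r : Fin (2*c+3)) : ℕ :=
  if h : (S.filter (fun i => r ≤ ρ i)).Nonempty then
    vposN c ((S.filter (fun i => r ≤ ρ i)).min' h)
      - ((ρ ((S.filter (fun i => r ≤ ρ i)).min' h)).val - r.val)
  else if r.val = 2*c+2 then selv else (c+1)*(2*c+4) + r.val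

lemma vposN_le (c : ℕ) (i : Fin c) : vposN c i ≤ c * (2*c+4) :=
  Nat.mul_le_mul_right _ (by have := i.isLt; omega)

lemma vposN_eq (c : ℕ) (i : Fin c) : vposN c i = (i.val + 1) * (2*c+4) := rfl

lemma eposN_vertex (c : ℕ) (S : Finset (Fin c)) (ρ : Fin c → Fin (2*c+3)) (selv : ℕ)
    (hρ : StrictMono ρ) {i : Fin c} (hi : i ∈ S) :
    eposN c S ρ selv (ρ i) = vposN c i := by
  have hmem : i ∈ S.filter (fun i' => ρ i ≤ ρ i') :=
    Finset.mem_filter.mpr ⟨hi, le_refl _⟩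
  have hne : (S.filter (fun i' => ρ i ≤ ρ i')).Nonempty := ⟨i, hmem⟩
  have hmin : (S.filter (fun i' => ρ i ≤ ρ i')).min' hne = i := by
    have h1 := Finset.min'_le _ _ hmem
    have h2 := Finset.min'_mem _ hne
    have h3 := (Finset.mem_filter.mp h2).2
    rcases lt_or_eq_of_le h1 with h' | h'
    · exact absurd h3 (not_le.mpr (hρ h'))
    · exact h'
  rw [eposN, dif_pos hne, hmin]
  simp

lemma eposN_strictMono (c : ℕ) (S : Finset (Fin c)) (ρ : Fin c → Fin (2*c+3)) (selv : ℕ)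
    (hsel : (c+2)*(2*c+4) < selv) :
    StrictMono (fun r => eposN c S ρ selv r) := by
  intro r r' hrr
  simp only [eposN]
  have hrr' : r.val < r'.val := hrr
  have hcK : c * (2*c+4) + (2*c+4) = (c+1)*(2*c+4) := by ring
  have hcK2 : (c+1) * (2*c+4) + (2*c+4) = (c+2)*(2*c+4) := by ring
  have hsubs : S.filter (fun i => r' ≤ ρ i) ⊆ S.filter (fun i => r ≤ ρ i) := by
    intro i hi
    have := Finset.mem_filter.mp hi
    exact Finset.mem_filter.mpr ⟨this.1, le_trans (le_of_lt hrr) this.2⟩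
  by_cases h' : (S.filter (fun i => r' ≤ ρ i)).Nonempty
  · have h : (S.filter (fun i => r ≤ ρ i)).Nonempty := ⟨h'.choose, hsubs h'.choose_spec⟩
    rw [dif_pos h, dif_pos h']
    set i₀ := (S.filter (fun i => r ≤ ρ i)).min' h with hi₀
    set i₁ := (S.filter (fun i => r' ≤ ρ i)).min' h' with hi₁
    have hmem1 : i₁ ∈ S.filter (fun i => r ≤ ρ i) := hsubs (Finset.min'_mem _ _)
    have h01 : i₀ ≤ i₁ := Finset.min'_le _ _ hmem1
    have hρ0 : r.val ≤ (ρ i₀).val := (Finset.mem_filter.mp (Finset.min'_mem _ h)).2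
    have hρ1 : r'.val ≤ (ρ i₁).val := (Finset.mem_filter.mp (Finset.min'_mem _ h')).2
    have hb0 : (ρ i₀).val < 2*c+3 := (ρ i₀).isLt
    have hb1 : (ρ i₁).val < 2*c+3 := (ρ i₁).isLt
    have hv0 : vposN c i₀ = (i₀.val + 1) * (2*c+4) := rfl
    have hv1 : vposN c i₁ = (i₁.val + 1) * (2*c+4) := rfl
    rcases lt_or_eq_of_le h01 with hlt | heq
    · have hlt' : i₀.val < i₁.val := hlt
      have hvv : (i₀.val + 1 + 1) * (2*c+4) ≤ (i₁.val + 1) * (2*c+4) :=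
        Nat.mul_le_mul_right _ (by omega)
      have e1 : (i₀.val + 1 + 1) * (2*c+4) = (i₀.val+1) * (2*c+4) + (2*c+4) := by ring
      omega
    · rw [← heq]
      rw [← heq] at hρ1 hv1
      have hv : 1 * (2*c+4) ≤ (i₀.val+1) * (2*c+4) := Nat.mul_le_mul_right _ (by omega)
      omega
  · rw [dif_neg h']
    by_cases h : (S.filter (fun i => r ≤ ρ i)).Nonempty
    · rw [dif_pos h]
      set i₀ := (S.filter (fun i => r ≤ ρ i)).min' h with hi₀
      have hv := vposN_le c i₀
      split
      · omega
      · have : r'.val < 2*c+3 := r'.isLt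
        omega
    · rw [dif_neg h]
      have hr : ¬ (r.val = 2*c+2) := by have := r'.isLt; omega
      rw [if_neg hr]
      split
      · have : r.val < 2*c+3 := r.isLt
        omega
      · omega

lemma eposN_eq_vpos (c : ℕ) (S : Finset (Fin c)) (ρ : Fin c → Fin (2*c+3)) (selv : ℕ)
    (hsel : (c+2)*(2*c+4) < selv) {r : Fin (2*c+3)} {i : Fin c}
    (h : eposN c S ρ selv r = vposN c i) : i ∈ S ∧ ρ i = r := by
  have hiv : (i.val + 1) ≤ c := i.isLt
  have hvc : (i.val+1)*(2*c+4) ≤ c*(2*c+4) := Nat.mul_le_mul_right _ hiv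
  have hcK : c * (2*c+4) + (2*c+4) = (c+1)*(2*c+4) := by ring
  have hcK2 : (c+1) * (2*c+4) + (2*c+4) = (c+2)*(2*c+4) := by ring
  have hvi : vposN c i = (i.val + 1) * (2*c+4) := rfl
  rw [eposN] at h
  split at h
  · next hne =>
    set i₀ := (S.filter (fun i' => r ≤ ρ i')).min' hne with hi₀
    have hmem := Finset.min'_mem _ hne
    have hiS : i₀ ∈ S := (Finset.mem_filter.mp hmem).1
    have hρ0 : r.val ≤ (ρ i₀).val := (Finset.mem_filter.mp hmem).2
    have hb0 : (ρ i₀).val < 2*c+3 := (ρ i₀).isLt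
    have hv0 : vposN c i₀ = (i₀.val + 1) * (2*c+4) := rfl
    have hieq : i₀.val = i.val := by
      rcases lt_trichotomy i₀.val i.val with hlt | heq | hgt
      · have h3 : (i₀.val + 1) * (2*c+4) ≤ i.val * (2*c+4) := Nat.mul_le_mul_right _ (by omega)
        have h2 : i.val * (2*c+4) + (2*c+4) = (i.val+1)*(2*c+4) := by ring
        omega
      · exact heq
      · have h3 : (i.val + 1 + 1) * (2*c+4) ≤ (i₀.val+1) * (2*c+4) := Nat.mul_le_mul_right _ (by omega)
        have h2 : (i.val + 1 + 1) * (2*c+4) = (i.val+1)*(2*c+4) + (2*c+4) := by ring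
        omega
    have hieq' : i₀ = i := Fin.ext hieq
    subst hieq'
    have hpos : 0 < (i₀.val+1) * (2*c+4) := Nat.mul_pos (by omega) (by omega)
    have hδ : (ρ i₀).val = r.val := by omega
    exact ⟨hiS, Fin.ext hδ⟩
  · next hne =>
    split at h
    · omega
    · have := r.isLt
      omega

lemma eposN_sel (c : ℕ) (S : Finset (Fin c)) (ρ : Fin c → Fin (2*c+3)) (selv : ℕ)
    (hρlt : ∀ i, (ρ i).val < 2*c+2) {r : Fin (2*c+3)} (hr : r.val = 2*c+2) :
    eposN c S ρ selv r = selv := by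
  have hne : ¬ (S.filter (fun i => r ≤ ρ i)).Nonempty := by
    rintro ⟨i, hi⟩
    have h2 : r.val ≤ (ρ i).val := (Finset.mem_filter.mp hi).2
    have := hρlt i
    omega
  rw [eposN, dif_neg hne, if_pos hr]

lemma eposN_sel_or_lt (c : ℕ) (S : Finset (Fin c)) (ρ : Fin c → Fin (2*c+3)) (selv : ℕ)
    (r : Fin (2*c+3)) :
    eposN c S ρ selv r = selv ∨ eposN c S ρ selv r < (c+2)*(2*c+4) := by
  have hcK : c * (2*c+4) + (2*c+4) = (c+1)*(2*c+4) := by ring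
  have hcK2 : (c+1) * (2*c+4) + (2*c+4) = (c+2)*(2*c+4) := by ring
  rw [eposN]
  split
  · next hne =>
    right
    have hv := vposN_le c ((S.filter (fun i => r ≤ ρ i)).min' hne)
    omega
  · split
    · left; rfl
    · right
      have := r.isLt
      omega

lemma eposN_bound (c d : ℕ) (S : Finset (Fin c)) (ρ : Fin c → Fin (2*c+3)) (selv : ℕ)
    (hselub : selv < (c+d+3)*(2*c+4)) (r : Fin (2*c+3)) :
    eposN c S ρ selv r < (c+d+3)*(2*c+4) := by
  have h2 : (c+2)*(2*c+4) ≤ (c+d+3)*(2*c+4) := Nat.mul_le_mul_right _ (by omega)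
  rcases eposN_sel_or_lt c S ρ selv r with h | h
  · omega
  · omega

/-- Induced Bipartite Ramsey Theorem: for every bipartite graph `G` there
exist `n, k` such that every 2-coloring of the edges of `B_{n,k}` contains an
induced monochromatic copy of `G`. -/
theorem stmt_10 (c d : ℕ) (Adj : Fin c → Fin d → Prop) :
    ∃ n k : ℕ, 0 < n ∧ 0 < k ∧
      ∀ COL : ℕ → Finset ℕ → Fin 2,
        ∃ (f : Fin c → ℕ) (g : Fin d → Finset ℕ) (col : Fin 2),
          Function.Injective f ∧ Function.Injective g ∧
          (∀ i, f i ∈ Finset.Icc 1 n) ∧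
          (∀ j, g j ⊆ Finset.Icc 1 n ∧ (g j).card = k) ∧
          (∀ i j, Adj i j ↔ f i ∈ g j) ∧
          (∀ i j, Adj i j → COL (f i) (g j) = col) := by
  classical
  obtain ⟨n₀, hram⟩ := hyperRamsey (2*c+3) (Fin (2*c+3) → Fin 2) ((c+d+3)*(2*c+4))
  refine ⟨max n₀ 1, 2*c+3, by omega, by omega, ?_⟩
  intro COL
  have hVcard : n₀ ≤ (Finset.Icc 1 (max n₀ 1)).card := by
    rw [Nat.card_Icc]; omega
  set γ : Finset ℕ → (Fin (2*c+3) → Fin 2) := fun T =>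
    if h : T.card = 2*c+3 then (fun r => COL (T.orderEmbOfFin h r) T) else (fun _ => 0)
    with hγ
  obtain ⟨H, hHV, hHcard, ψ, hψ⟩ := hram γ (Finset.Icc 1 (max n₀ 1)) hVcard
  obtain ⟨H', hH'H, hH'card⟩ := Finset.exists_subset_card_eq hHcard
  set η := H'.orderEmbOfFin hH'card with hη
  -- majority color among ranks < 2c+2
  have hbasemem : ∀ m ∈ Finset.range (2*c+2), m < 2*c+3 := by
    intro m hm; have := Finset.mem_range.mp hm; omega
  set base : Finset (Fin (2*c+3)) := (Finset.range (2*c+2)).attachFin hbasemem with hbase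
  have hbasecard : base.card = 2*c+2 := by
    rw [hbase, Finset.card_attachFin, Finset.card_range]
  have hbase_val : ∀ r : Fin (2*c+3), r ∈ base ↔ r.val < 2*c+2 := by
    intro r
    rw [hbase, Finset.mem_attachFin, Finset.mem_range]
  have hsplit : (base.filter (fun r => ψ r = 0)).card
      + (base.filter (fun r => ψ r = 1)).card = 2*c+2 := by
    have h1 := Finset.card_filter_add_card_filter_not (s := base)
      (p := fun r => ψ r = 0)
    have h2 : base.filter (fun r => ¬ ψ r = 0) = base.filter (fun r => ψ r = 1) :=
      Finset.filter_congr (fun r _ =>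
        (by decide : ∀ x : Fin 2, (¬ x = 0) ↔ (x = 1)) (ψ r))
    rw [h2] at h1
    omega
  have hmaj : ∃ col : Fin 2, c ≤ (base.filter (fun r => ψ r = col)).card := by
    rcases le_or_gt c ((base.filter (fun r => ψ r = 0)).card) with h | h
    · exact ⟨0, h⟩
    · exact ⟨1, by omega⟩
  obtain ⟨col, hcolcard⟩ := hmaj
  obtain ⟨tsub, htsub, htsubcard⟩ := Finset.exists_subset_card_eq hcolcard
  set ρ : Fin c → Fin (2*c+3) := fun i => tsub.orderEmbOfFin htsubcard i with hρ
  have hρmono : StrictMono ρ := (tsub.orderEmbOfFin htsubcard).strictMono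
  have hρfilter : ∀ i, ρ i ∈ base.filter (fun r => ψ r = col) :=
    fun i => htsub (Finset.orderEmbOfFin_mem tsub htsubcard i)
  have hρcol : ∀ i, ψ (ρ i) = col := fun i => (Finset.mem_filter.mp (hρfilter i)).2
  have hρlt : ∀ i, (ρ i).val < 2*c+2 :=
    fun i => (hbase_val (ρ i)).mp (Finset.mem_filter.mp (hρfilter i)).1
  set S : Fin d → Finset (Fin c) := fun j => univ.filter (fun i => Adj i j) with hS
  set sel : Fin d → ℕ := fun j => (c+2+j.val)*(2*c+4)+1 with hsel
  have hselbd : ∀ j, (c+2)*(2*c+4) < sel j := by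
    intro j
    have h1 : (c+2)*(2*c+4) ≤ (c+2+j.val)*(2*c+4) := Nat.mul_le_mul_right _ (by omega)
    simp only [hsel]
    omega
  have hselub : ∀ j : Fin d, sel j < (c+d+3)*(2*c+4) := by
    intro j
    have hj := j.isLt
    have h1 : (c+2+j.val+1)*(2*c+4) ≤ (c+d+3)*(2*c+4) := Nat.mul_le_mul_right _ (by omega)
    have h2 : (c+2+j.val+1)*(2*c+4) = (c+2+j.val)*(2*c+4) + (2*c+4) := by ring
    simp only [hsel]
    omega
  have hselinj : ∀ j j' : Fin d, sel j = sel j' → j = j' := by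
    intro j j' h
    simp only [hsel] at h
    have h1 : (c+2+j.val)*(2*c+4) = (c+2+j'.val)*(2*c+4) := by omega
    have h2 : (c+2+j.val) = (c+2+j'.val) :=
      Nat.eq_of_mul_eq_mul_right (by omega) h1
    exact Fin.ext (by omega)
  have hM : ∀ (j : Fin d) (r : Fin (2*c+3)),
      eposN c (S j) ρ (sel j) r < (c+d+3)*(2*c+4) :=
    fun j r => eposN_bound c d (S j) ρ (sel j) (hselub j) r
  have hvM : ∀ i : Fin c, vposN c i < (c+d+3)*(2*c+4) := by
    intro i
    have h1 := vposN_le c i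
    have h2 : (c+1)*(2*c+4) ≤ (c+d+3)*(2*c+4) := Nat.mul_le_mul_right _ (by omega)
    have h3 : c*(2*c+4) + (2*c+4) = (c+1)*(2*c+4) := by ring
    omega
  set f : Fin c → ℕ := fun i => η ⟨vposN c i, hvM i⟩ with hf
  set g : Fin d → Finset ℕ :=
    fun j => univ.image (fun r => η ⟨eposN c (S j) ρ (sel j) r, hM j r⟩) with hg
  have hηinj : Function.Injective η := η.injective
  have hgstrict : ∀ j : Fin d,
      StrictMono (fun r => η ⟨eposN c (S j) ρ (sel j) r, hM j r⟩) := by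
    intro j a b hab
    exact η.strictMono (by
      simp only [Fin.mk_lt_mk]
      exact eposN_strictMono c (S j) ρ (sel j) (hselbd j) hab)
  have hgcard : ∀ j, (g j).card = 2*c+3 := by
    intro j
    rw [hg]
    rw [Finset.card_image_of_injective _ (hgstrict j).injective, Finset.card_univ,
      Fintype.card_fin]
  have hgsubH : ∀ j, g j ⊆ H := by
    intro j x hx
    rw [hg] at hx
    obtain ⟨r, _, rfl⟩ := Finset.mem_image.mp hx
    exact hH'H (Finset.orderEmbOfFin_mem H' hH'card _)
  have hfiH : ∀ i, f i ∈ H := by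
    intro i
    exact hH'H (Finset.orderEmbOfFin_mem H' hH'card _)
  have hmem_iff : ∀ (i : Fin c) (j : Fin d), Adj i j ↔ f i ∈ g j := by
    intro i j
    constructor
    · intro hadj
      have hiS : i ∈ S j := by
        rw [hS]; exact Finset.mem_filter.mpr ⟨Finset.mem_univ i, hadj⟩
      have hv := eposN_vertex c (S j) ρ (sel j) hρmono hiS
      rw [hg]
      refine Finset.mem_image.mpr ⟨ρ i, Finset.mem_univ _, ?_⟩
      rw [hf]
      congr 1
      exact Fin.ext hv
    · intro hmem
      rw [hg] at hmem
      obtain ⟨r, _, heq⟩ := Finset.mem_image.mp hmem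
      rw [hf] at heq
      have heq2 : eposN c (S j) ρ (sel j) r = vposN c i := by
        have := hηinj heq
        exact congrArg Fin.val this
      have hres := eposN_eq_vpos c (S j) ρ (sel j) (hselbd j) heq2
      have := hres.1
      rw [hS] at this
      exact (Finset.mem_filter.mp this).2
  have hginj : Function.Injective g := by
    intro j j' hgj
    set rtop : Fin (2*c+3) := ⟨2*c+2, by omega⟩ with hrtop
    have hsel1 : eposN c (S j) ρ (sel j) rtop = sel j :=
      eposN_sel c (S j) ρ (sel j) hρlt rfl
    have hmem1 : η ⟨eposN c (S j) ρ (sel j) rtop, hM j rtop⟩ ∈ g j := by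
      rw [hg]
      exact Finset.mem_image.mpr ⟨rtop, Finset.mem_univ _, rfl⟩
    rw [hgj, hg] at hmem1
    obtain ⟨r, _, heq⟩ := Finset.mem_image.mp hmem1
    have heq2 : eposN c (S j') ρ (sel j') r = eposN c (S j) ρ (sel j) rtop :=
      congrArg Fin.val (hηinj heq)
    rw [hsel1] at heq2
    rcases eposN_sel_or_lt c (S j') ρ (sel j') r with h | h
    · exact (hselinj j' j (by omega)).symm
    · exact absurd (hselbd j) (by omega)
  have hfinj : Function.Injective f := by
    intro i i' heq
    rw [hf] at heq
    have h1 : vposN c i = vposN c i' := congrArg Fin.val (hηinj heq)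
    rw [vposN_eq, vposN_eq] at h1
    have h2 : i.val + 1 = i'.val + 1 := Nat.eq_of_mul_eq_mul_right (by omega) h1
    exact Fin.ext (by omega)
  refine ⟨f, g, col, hfinj, hginj, ?_, ?_, hmem_iff, ?_⟩
  · intro i
    exact hHV (hfiH i)
  · intro j
    exact ⟨fun x hx => hHV (hgsubH j hx), hgcard j⟩
  · intro i j hadj
    have hγgj := hψ (g j) (hgsubH j) (hgcard j)
    have hγdef : ∀ (r : Fin (2*c+3)),
        γ (g j) r = COL ((g j).orderEmbOfFin (hgcard j) r) (g j) := by
      intro r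
      simp only [hγ]
      rw [dif_pos (hgcard j)]
    have huniq := Finset.orderEmbOfFin_unique (hgcard j)
      (f := fun r => η ⟨eposN c (S j) ρ (sel j) r, hM j r⟩)
      (fun r => by rw [hg]; exact Finset.mem_image.mpr ⟨r, Finset.mem_univ _, rfl⟩)
      (hgstrict j)
    have hiS : i ∈ S j := by
      rw [hS]; exact Finset.mem_filter.mpr ⟨Finset.mem_univ i, hadj⟩
    have hv := eposN_vertex c (S j) ρ (sel j) hρmono hiS
    have hfi : f i = (g j).orderEmbOfFin (hgcard j) (ρ i) := by
      rw [← huniq]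
      show η ⟨vposN c i, hvM i⟩ = η ⟨eposN c (S j) ρ (sel j) (ρ i), hM j (ρ i)⟩
      exact congrArg η (Fin.mk_eq_mk.mpr hv.symm)
    calc COL (f i) (g j) = COL ((g j).orderEmbOfFin (hgcard j) (ρ i)) (g j) := by rw [hfi]
    _ = γ (g j) (ρ i) := (hγdef (ρ i)).symm
    _ = ψ (ρ i) := by rw [hγgj]
    _ = col := hρcol i
end

section
/- Let s = ab + b − 1 and L = {b, 2b, ..., ab} ⊆ [s]. For every b-element subset S = {x₁ < ... < x_b} of L and every b-element index set I = {i₁ < ... < i_b} ⊆ [2b−1], there exists a (2b−1)-element subset X of [s] such that X ∩ L = S and, writing X = {z₁ < ... < z_{2b−1}}, we have z_{i_j} = x_j for all j = 1,...,b. -/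
/-- A strictly monotone function from `Fin m` to `ℕ` grows at least linearly. -/
lemma sm_gap_aux {m : ℕ} {f : Fin m → ℕ} (hf : StrictMono f) :
    ∀ d (j t : Fin m), (t : ℕ) = (j : ℕ) + d → f j + d ≤ f t := by
  intro d
  induction d with
  | zero =>
    intro j t h
    have : j = t := Fin.ext (by omega)
    subst this; omega
  | succ d ih =>
    intro j t h
    have ht' : (j : ℕ) + d < m := by have := t.isLt; omega
    have h1 := ih j ⟨(j : ℕ) + d, ht'⟩ rfl
    have h2 : f ⟨(j : ℕ) + d, ht'⟩ < f t := hf (by simp [Fin.lt_def]; omega)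
    omega

lemma sm_gap {m : ℕ} {f : Fin m → ℕ} (hf : StrictMono f) (j t : Fin m)
    (h : (j : ℕ) ≤ t) : f j + ((t : ℕ) - (j : ℕ)) ≤ f t :=
  sm_gap_aux hf ((t : ℕ) - (j : ℕ)) j t (by omega)

/-- Combinatorial core of the induced `B_{a,b}` Ramsey theorem: for every
`b`-subset `S` of `L = {b, 2b, …, ab}` and every `b`-element index set
`I ⊆ [2b-1]`, there is a `(2b-1)`-subset `X` of `[ab+b-1]` with `X ∩ L = S`
whose elements at the index positions `I` are exactly the elements of `S`
(in increasing order). -/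
theorem stmt_16 (a b : ℕ) (hb : 0 < b) (hba : b ≤ a) :
    ∀ S ⊆ (Finset.Icc 1 a).image (· * b), S.card = b →
      ∀ I : Finset (Fin (2 * b - 1)), I.card = b →
        ∃ (X : Finset ℕ) (hX : X.card = 2 * b - 1),
          X ⊆ Finset.Icc 1 (a * b + b - 1) ∧
          X ∩ (Finset.Icc 1 a).image (· * b) = S ∧
          (∀ i : Fin (2 * b - 1), ((X.orderIsoOfFin hX i : ℕ) ∈ S ↔ i ∈ I)) := by
  intro S hSL hS I hI
  have hb1 : b - 1 < b := Nat.sub_lt hb one_pos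
  set L : Finset ℕ := (Finset.Icc 1 a).image (· * b) with hL
  set eS : Fin b ↪o ℕ := S.orderEmbOfFin hS with heS
  set eI : Fin b ↪o Fin (2 * b - 1) := I.orderEmbOfFin hI with heI
  -- elements of S as multiples of b
  have hSc : ∀ j : Fin b, ∃ m : ℕ, 1 ≤ m ∧ m ≤ a ∧ m * b = eS j := by
    intro j
    have hmem : eS j ∈ S := Finset.orderEmbOfFin_mem S hS j
    have := hSL hmem
    rw [hL, Finset.mem_image] at this
    obtain ⟨m, hm, hmb⟩ := this
    rw [Finset.mem_Icc] at hm
    exact ⟨m, hm.1, hm.2, hmb⟩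
  set c : Fin b → ℕ := fun j => eS j / b with hc
  have hcb : ∀ j : Fin b, c j * b = eS j ∧ 1 ≤ c j ∧ c j ≤ a := by
    intro j
    obtain ⟨m, h1, h2, h3⟩ := hSc j
    have : c j = m := by rw [hc]; simp only [← h3]; exact Nat.mul_div_cancel m hb
    rw [this]; exact ⟨h3, h1, h2⟩
  have hcmono : StrictMono c := by
    intro j j' hjj
    have h1 := (hcb j).1; have h2 := (hcb j').1
    have : eS j < eS j' := eS.strictMono hjj
    have : c j * b < c j' * b := by omega
    exact lt_of_mul_lt_mul_right this (le_of_lt hb)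
  have hc_gap : ∀ j t : Fin b, (j : ℕ) ≤ t → c j + ((t : ℕ) - j) ≤ c t :=
    fun j t h => sm_gap hcmono j t h
  -- counting function
  set k : Fin (2 * b - 1) → ℕ :=
    fun i => (Finset.univ.filter fun j : Fin b => eI j < i).card with hk
  have hk_le : ∀ i, k i ≤ b := by
    intro i
    calc (Finset.univ.filter fun j : Fin b => eI j < i).card
        ≤ (Finset.univ : Finset (Fin b)).card := Finset.card_filter_le _ _
      _ = b := by simp
  -- the criterion
  have crit : ∀ (i : Fin (2 * b - 1)) (j : Fin b), ((j : ℕ) < k i ↔ eI j < i) := by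
    intro i j
    constructor
    · intro hj
      simp only [hk] at hj
      by_contra hne
      have hsub : (Finset.univ.filter fun t : Fin b => eI t < i) ⊆ Finset.Iio j := by
        intro t ht
        rw [Finset.mem_filter] at ht
        rw [Finset.mem_Iio]
        by_contra hle
        push_neg at hle
        exact hne (lt_of_le_of_lt (eI.monotone hle) ht.2)
      have := Finset.card_le_card hsub
      rw [Fin.card_Iio] at this
      omega
    · intro hj
      have hsub : Finset.Iic j ⊆ (Finset.univ.filter fun t : Fin b => eI t < i) := by
        intro t ht
        rw [Finset.mem_Iic] at ht
        rw [Finset.mem_filter]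
        exact ⟨Finset.mem_univ t, lt_of_le_of_lt (eI.monotone ht) hj⟩
      have := Finset.card_le_card hsub
      rw [Fin.card_Iic] at this
      simp only [hk]
      omega
  have kmono : ∀ i i' : Fin (2 * b - 1), i ≤ i' → k i ≤ k i' := by
    intro i i' h
    apply Finset.card_le_card
    intro t ht
    rw [Finset.mem_filter] at ht ⊢
    exact ⟨ht.1, lt_of_lt_of_le ht.2 h⟩
  have keI : ∀ j : Fin b, k (eI j) = j := by
    intro j
    simp only [hk]
    have : (Finset.univ.filter fun t : Fin b => eI t < eI j) = Finset.Iio j := by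
      ext t
      simp [eI.lt_iff_lt, Finset.mem_Iio]
    rw [this, Fin.card_Iio]
  have kI : ∀ i ∈ I, ∃ j : Fin b, eI j = i ∧ k i = j := by
    intro i hi
    have : i ∈ Set.range eI := by
      rw [heI, Finset.range_orderEmbOfFin]; exact hi
    obtain ⟨j, hj⟩ := this
    exact ⟨j, hj, by rw [← hj, keI]⟩
  have kge : ∀ i : Fin (2 * b - 1), k i ≤ (i : ℕ) := by
    intro i
    have h2 := Finset.card_le_card_of_injOn
      (s := Finset.univ.filter fun j : Fin b => eI j < i)
      (t := Finset.Iio i) (fun j => eI j)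
      (fun t ht => by
        rw [Finset.mem_coe, Finset.mem_filter] at ht; rw [Finset.mem_coe, Finset.mem_Iio]; exact ht.2)
      (fun x _ y _ hxy => eI.injective hxy)
    rw [Fin.card_Iio] at h2
    simp only [hk]
    exact h2
  -- bounds on eI
  have hmono' : StrictMono (fun t : Fin b => ((eI t : Fin (2*b-1)) : ℕ)) :=
    fun x y hxy => by exact_mod_cast eI.strictMono hxy
  have eI_lb : ∀ j : Fin b, (j : ℕ) ≤ (eI j : ℕ) := by
    intro j
    have h := sm_gap hmono' ⟨0, hb⟩ j (by simp)
    have h' : ((eI ⟨0, hb⟩ : Fin (2*b-1)) : ℕ) + ((j : ℕ) - 0) ≤ (eI j : ℕ) := h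
    omega
  have eI_ub : ∀ j : Fin b, (eI j : ℕ) ≤ b - 1 + j := by
    intro j
    have hjb : (j : ℕ) ≤ b - 1 := by have := j.isLt; omega
    have h := sm_gap hmono' j ⟨b - 1, hb1⟩ hjb
    have h' : (eI j : ℕ) + ((b - 1) - (j : ℕ)) ≤ ((eI ⟨b - 1, hb1⟩ : Fin (2*b-1)) : ℕ) := h
    have hlt : ((eI ⟨b - 1, hb1⟩ : Fin (2*b-1)) : ℕ) < 2 * b - 1 := (eI _).isLt
    omega
  -- the function f
  set f : Fin (2 * b - 1) → ℕ := fun i =>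
    if h : k i < b then eS ⟨k i, h⟩ - ((eI ⟨k i, h⟩ : ℕ) - i)
    else eS ⟨b - 1, hb1⟩ + ((i : ℕ) - (eI ⟨b - 1, hb1⟩ : ℕ)) with hf
  -- basic facts in the two cases
  have case_lt : ∀ (i : Fin (2 * b - 1)) (h : k i < b),
      (i : ℕ) ≤ eI ⟨k i, h⟩ ∧ (eI ⟨k i, h⟩ : ℕ) - i ≤ b - 1 := by
    intro i h
    have h1 : ¬ ((⟨k i, h⟩ : Fin b) : ℕ) < k i := by simp
    have h2 : ¬ eI ⟨k i, h⟩ < i := fun hc => h1 ((crit i ⟨k i, h⟩).2 hc)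
    push_neg at h2
    have h3 := eI_ub ⟨k i, h⟩
    have h4 := kge i
    simp only at h3
    constructor
    · exact_mod_cast h2
    · have : (i : ℕ) ≤ (eI ⟨k i, h⟩ : ℕ) := by exact_mod_cast h2
      omega
  have case_eq : ∀ (i : Fin (2 * b - 1)), ¬ k i < b →
      (eI ⟨b - 1, hb1⟩ : ℕ) < i ∧ (i : ℕ) - (eI ⟨b - 1, hb1⟩ : ℕ) ≤ b - 1 := by
    intro i h
    have hkb : k i = b := le_antisymm (hk_le i) (by omega)
    have h1 : ((⟨b - 1, hb1⟩ : Fin b) : ℕ) < k i := by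
      show b - 1 < k i
      rw [hkb]; omega
    have h2 : eI ⟨b - 1, hb1⟩ < i := (crit i ⟨b - 1, hb1⟩).1 h1
    have h3 := eI_lb ⟨b - 1, hb1⟩
    have h4 : (i : ℕ) < 2 * b - 1 := i.isLt
    simp only at h3
    have h2' : ((eI ⟨b - 1, hb1⟩ : Fin (2*b-1)) : ℕ) < (i : ℕ) := h2
    exact ⟨h2', by omega⟩
  -- product bridging facts
  have hmul : ∀ x y : ℕ, x ≤ y → x * b ≤ y * b := fun x y h => Nat.mul_le_mul_right b h
  -- strict monotonicity
  have fmono : StrictMono f := by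
    intro i i' hii
    have hki : k i ≤ k i' := kmono i i' (le_of_lt hii)
    rw [hf]
    by_cases h : k i < b
    · have hc1 := (hcb ⟨k i, h⟩).1
      have hc2 := (hcb ⟨k i, h⟩).2
      by_cases h' : k i' < b
      · simp only [dif_pos h, dif_pos h']
        rcases eq_or_lt_of_le hki with heq | hlt
        · have hfin : (⟨k i, h⟩ : Fin b) = ⟨k i', h'⟩ := Fin.ext heq
          rw [← hfin]
          have hle := (case_lt i' h').1
          have hle' : (i' : ℕ) ≤ (eI ⟨k i, h⟩ : ℕ) := by rw [hfin]; exact_mod_cast hle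
          have hd := (case_lt i h).2
          have hii' : (i : ℕ) < (i' : ℕ) := hii
          have hESb : b ≤ eS ⟨k i, h⟩ := by
            have := hmul 1 (c ⟨k i, h⟩) hc2.1; omega
          omega
        · -- k i < k i' < b
          have hd' := (case_lt i' h').2
          have hgap := hc_gap ⟨k i, h⟩ ⟨k i', h'⟩ (le_of_lt hlt)
          simp only at hgap
          have hc1' := (hcb ⟨k i', h'⟩).1
          have hcc : c ⟨k i, h⟩ + 1 ≤ c ⟨k i', h'⟩ := by omega
          have := hmul _ _ hcc
          rw [add_mul, one_mul] at this
          omega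
      · simp only [dif_pos h, dif_neg h']
        have hkib : k i ≤ b - 1 := by omega
        have hmono := eS.monotone (show (⟨k i, h⟩ : Fin b) ≤ ⟨b - 1, hb1⟩ from hkib)
        have := (case_eq i' h').1
        omega
    · have h' : ¬ k i' < b := by omega
      simp only [dif_neg h, dif_neg h']
      have h1 := (case_eq i h).1
      have hii' : (i : ℕ) < (i' : ℕ) := hii
      omega
  -- bound facts for f
  have fbound : ∀ i : Fin (2 * b - 1), 1 ≤ f i ∧ f i ≤ a * b + b - 1 := by
    intro i
    rw [hf]
    by_cases h : k i < b
    · simp only [dif_pos h]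
      have hc1 := (hcb ⟨k i, h⟩).1
      have hc2 := (hcb ⟨k i, h⟩).2
      have hd := (case_lt i h).2
      have hlo := hmul 1 (c ⟨k i, h⟩) hc2.1
      have hhi := hmul (c ⟨k i, h⟩) a hc2.2
      rw [one_mul] at hlo
      omega
    · simp only [dif_neg h]
      have hc1 := (hcb ⟨b - 1, hb1⟩).1
      have hc2 := (hcb ⟨b - 1, hb1⟩).2
      have hd := (case_eq i h).2
      have hlo := hmul 1 (c ⟨b - 1, hb1⟩) hc2.1
      have hhi := hmul (c ⟨b - 1, hb1⟩) a hc2.2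
      rw [one_mul] at hlo
      omega
  -- value of f on I
  have fI : ∀ i ∈ I, ∃ j : Fin b, eI j = i ∧ f i = eS j := by
    intro i hi
    obtain ⟨j, hj1, hj2⟩ := kI i hi
    have hjb : k i < b := by rw [hj2]; exact j.isLt
    refine ⟨j, hj1, ?_⟩
    rw [hf]
    simp only [dif_pos hjb]
    have hfin : (⟨k i, hjb⟩ : Fin b) = j := Fin.ext hj2
    rw [hfin, hj1]
    omega
  -- f avoids L off I
  have fnI : ∀ i : Fin (2 * b - 1), i ∉ I → f i ∉ L := by
    intro i hi hmem
    rw [hL, Finset.mem_image] at hmem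
    obtain ⟨m, hm, hmb⟩ := hmem
    rw [Finset.mem_Icc] at hm
    rw [hf] at hmb
    by_cases h : k i < b
    · simp only [dif_pos h] at hmb
      have hc1 := (hcb ⟨k i, h⟩).1
      have hc2 := (hcb ⟨k i, h⟩).2
      have hd := (case_lt i h).2
      have hd1 : 1 ≤ (eI ⟨k i, h⟩ : ℕ) - i := by
        have hle := (case_lt i h).1
        rcases eq_or_lt_of_le hle with heq | hlt
        · exfalso
          have : eI ⟨k i, h⟩ = i := Fin.ext heq.symm
          rw [← this] at hi
          exact hi (by rw [heI]; exact Finset.orderEmbOfFin_mem I hI _)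
        · omega
      have hlo := hmul 1 (c ⟨k i, h⟩) hc2.1
      rw [one_mul] at hlo
      rcases lt_or_ge m (c ⟨k i, h⟩) with hlt | hge
      · have := hmul (m + 1) (c ⟨k i, h⟩) hlt
        rw [add_mul, one_mul] at this
        omega
      · have := hmul (c ⟨k i, h⟩) m hge
        omega
    · simp only [dif_neg h] at hmb
      have hc1 := (hcb ⟨b - 1, hb1⟩).1
      have hd := (case_eq i h).2
      have hd1 : 1 ≤ (i : ℕ) - (eI ⟨b - 1, hb1⟩ : ℕ) := by
        have := (case_eq i h).1; omega
      rcases le_or_gt m (c ⟨b - 1, hb1⟩) with hle | hgt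
      · have := hmul m (c ⟨b - 1, hb1⟩) hle
        omega
      · have := hmul (c ⟨b - 1, hb1⟩ + 1) m hgt
        rw [add_mul, one_mul] at this
        omega
  -- build X
  set X : Finset ℕ := Finset.image f Finset.univ with hXdef
  have hX : X.card = 2 * b - 1 := by
    rw [hXdef, Finset.card_image_of_injective _ fmono.injective, Finset.card_univ,
      Fintype.card_fin]
  have hfeq : f = X.orderEmbOfFin hX :=
    Finset.orderEmbOfFin_unique hX
      (fun i => Finset.mem_image_of_mem f (Finset.mem_univ i)) fmono
  refine ⟨X, hX, ?_, ?_, ?_⟩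
  · intro x hx
    rw [hXdef, Finset.mem_image] at hx
    obtain ⟨i, _, rfl⟩ := hx
    rw [Finset.mem_Icc]
    exact fbound i
  · ext x
    constructor
    · intro hx
      rw [Finset.mem_inter] at hx
      obtain ⟨hx1, hx2⟩ := hx
      rw [hXdef, Finset.mem_image] at hx1
      obtain ⟨i, _, rfl⟩ := hx1
      by_cases hi : i ∈ I
      · obtain ⟨j, _, hj2⟩ := fI i hi
        rw [hj2]
        exact Finset.orderEmbOfFin_mem S hS j
      · exact absurd hx2 (fnI i hi)
    · intro hx
      rw [Finset.mem_inter]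
      refine ⟨?_, hSL hx⟩
      have : x ∈ Set.range eS := by
        rw [heS, Finset.range_orderEmbOfFin]; exact hx
      obtain ⟨j, hj⟩ := this
      have hiI : eI j ∈ I := by rw [heI]; exact Finset.orderEmbOfFin_mem I hI j
      obtain ⟨j', hj'1, hj'2⟩ := fI (eI j) hiI
      have : j' = j := eI.injective hj'1
      rw [this] at hj'2
      rw [hXdef, Finset.mem_image]
      exact ⟨eI j, Finset.mem_univ _, by rw [hj'2, hj]⟩
  · intro i
    rw [Finset.coe_orderIsoOfFin_apply, ← hfeq]
    constructor
    · intro hfi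
      by_contra hi
      exact fnI i hi (hSL hfi)
    · intro hi
      obtain ⟨j, _, hj2⟩ := fI i hi
      rw [hj2]
      exact Finset.orderEmbOfFin_mem S hS j
end

section
/- Every 2-coloring of the edges of K_{n,k} contains a monochromatic induced copy of K_{a,b} whenever n ≥ a·2^{2b} and k ≥ 2b; here 'induced' is automatic since any subgraph of a complete bipartite graph on chosen left and right vertex subsets is complete bipartite. -/
/-- Every 2-coloring of `K_{n,k}` with `n ≥ a·2^(2b)` and `k ≥ 2b` contains a
monochromatic (automatically induced) copy of `K_{a,b}`. -/
theorem stmt_17 (a b n k : ℕ) (ha : 0 < a) (hb : 0 < b)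
    (hn : n ≥ a * 2 ^ (2 * b)) (hk : k ≥ 2 * b)
    (COL : Fin n → Fin k → Fin 2) :
    ∃ (A : Finset (Fin n)) (B : Finset (Fin k)) (c : Fin 2),
      A.card = a ∧ B.card = b ∧ ∀ x ∈ A, ∀ y ∈ B, COL x y = c := by
  classical
  -- choose K₀ ⊆ Fin k of size 2b
  obtain ⟨K0, hK0sub, hK0card⟩ :
      ∃ K0 : Finset (Fin k), K0 ⊆ Finset.univ ∧ K0.card = 2 * b := by
    apply Finset.exists_subset_card_eq
    simpa using hk
  -- classify left vertices by their pattern on K₀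
  set F : Fin n → (↥K0 → Fin 2) := fun x y => COL x y.1 with hF
  have hcardfun : Fintype.card (↥K0 → Fin 2) = 2 ^ (2 * b) := by
    simp [Fintype.card_fun, hK0card]
  obtain ⟨p, -, hp⟩ :
      ∃ p ∈ (Finset.univ : Finset (↥K0 → Fin 2)), a ≤
        (Finset.univ.filter fun x : Fin n => F x = p).card := by
    apply Finset.exists_le_card_fiber_of_mul_le_card_of_maps_to
    · intro x _; exact Finset.mem_univ _
    · exact Finset.univ_nonempty
    · calc (Finset.univ : Finset (↥K0 → Fin 2)).card * a
          = a * 2 ^ (2 * b) := by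
            rw [Finset.card_univ, hcardfun, Nat.mul_comm]
        _ ≤ n := hn
        _ = (Finset.univ : Finset (Fin n)).card := by simp
  obtain ⟨A, hAsub, hAcard⟩ := Finset.exists_subset_card_eq hp
  -- within K₀, one color of p appears at least b times
  obtain ⟨c, -, hc⟩ :
      ∃ c ∈ (Finset.univ : Finset (Fin 2)), b ≤
        (Finset.univ.filter fun y : ↥K0 => p y = c).card := by
    apply Finset.exists_le_card_fiber_of_mul_le_card_of_maps_to
    · intro y _; exact Finset.mem_univ _
    · exact Finset.univ_nonempty
    · have : (Finset.univ : Finset (↥K0)).card = 2 * b := by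
        simp [hK0card]
      simp [this, hK0card]
  obtain ⟨B', hB'sub, hB'card⟩ := Finset.exists_subset_card_eq hc
  refine ⟨A, B'.image (Subtype.val), c, hAcard, ?_, ?_⟩
  · rw [Finset.card_image_of_injective _ Subtype.val_injective, hB'card]
  · intro x hx y hy
    obtain ⟨y', hy', rfl⟩ := Finset.mem_image.mp hy
    have hxp : F x = p := (Finset.mem_filter.mp (hAsub hx)).2
    have hyc : p y' = c := (Finset.mem_filter.mp (hB'sub hy')).2
    calc COL x y'.1 = F x y' := rfl
      _ = p y' := by rw [hxp]
      _ = c := hyc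
end
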